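/- arXiv:2208.08055 — 4 statements merged into one kernel-verified Lean document; each statement's English description precedes it below -/
import Mathlib

section
/- (Corollary 1: RIS aligned to user k, N → ∞.) Fix M and all real parameters, and for each N ≥ 1 let f_1(N),…,f_K(N) and b_{ki}(N) (i ≠ k) be admissible data such that |f_k(N)| = N for every N, there is a constant C > 0 with |f_i(N)| ≤ C for all i ≠ k and all N, and |b_{ki}(N)| ≤ N for all i ≠ k. Then the closed-form rate satisfies R̃_k(N) → log₂( τι²M/(1−τ) + (1−ι²τ)/(1−τ) ) as N → ∞. -/
open MeasureTheory ProbabilityTheory Filter Finset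

noncomputable section
/-- Coefficient `c_{k,1}`. -/
def ck1 (N : ℕ) (μk δ ρ : ℝ) (fk : ℂ) : ℝ :=
  (ρ^2*(μk+δ+1)^2 + (1-ρ^2)*δ^2*μk + δ^2) * (N:ℝ)^2
  + (((2*μk+3*δ+2-δ*μk)*ρ^2 + (1+μk)*δ) * δ*μk*(‖fk‖)^2
     + (μk+δ+2)^2 - ρ^2*(μk+δ+1)^2 - 2*ρ^2*δ*μk - 2) * (N:ℝ)
  + ρ^2*δ^2*μk^2*(‖fk‖)^4 + 2*((1-ρ^2)*(μk+δ)+2)*δ*μk*(‖fk‖)^2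

/-- Coefficient `c_{k,2}`. -/
def ck2 (μk δ ρ ι : ℝ) : ℝ :=
  ((1-ι^2)*(μk+δ+1)^2 - δ*μk*(μk+1+δ-ι^2*δ))*ρ^2 + (δ+μk+1)*δ*μk + (μk+δ+1)^2
  - (μk+1)*ι^2*δ^2

/-- Coefficient `c_{k,3}`. -/
def ck3 (μk δ ρ ι : ℝ) (fk : ℂ) : ℝ :=
  (((3-2*ι^2)*(μk+1) + (ι^2-1)*δ*(μk-3))*ρ^2 + (δ+1-ι^2*δ)*(μk+1)) * δ*μk*(‖fk‖)^2
  + ((ι^2-1)*(μk+δ+1)^2 + 2*(ι^2-2)*μk*δ)*ρ^2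
  + (1-ι^2)*(μk+δ+2)^2 + 2*μk*δ + 2*μk + 2*δ - 1 - 2*ι^2

/-- Coefficient `c_{k,4}`. -/
def ck4 (μk δ ρ ι : ℝ) (fk : ℂ) : ℝ :=
  (1-ι^2)*ρ^2*δ^2*μk^2*(‖fk‖)^4
  + 2*δ*μk*(‖fk‖)^2*((1-ι^2)*(1-ρ^2)*(μk+δ+1) + (2-ι^2)*(1+ρ^2))

/-- The closed-form second moment `ξ_k`. -/
def xiK (M N : ℕ) (αk μk β δ ρ ι κ : ℝ) (fk : ℂ) : ℝ :=
  (β^2*αk^2*κ^2*(M:ℝ)/((δ+1)^2*(μk+1)^2))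
    * (ck1 N μk δ ρ fk * ι^2 * (M:ℝ) + ck2 μk δ ρ ι * (N:ℝ)^2 + ck3 μk δ ρ ι fk * (N:ℝ)
       + ck4 μk δ ρ ι fk)

/-- Coefficient `z_{ki,1}`. -/
def zki1 (N : ℕ) (μk μi δ ρ : ℝ) (fk fi bki : ℂ) : ℝ :=
  (μi+1-ρ^2*μi)*δ^2*(N:ℝ)^2
  + ((μi+1-ρ^2*μi)*δ^2*μk*(‖fk‖)^2 + ρ^2*δ^2*μi*(‖fi‖)^2
     + (μk+2*δ+1)*(μi+1-ρ^2*μi) + ρ^2*μi) * (N:ℝ)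
  + (2*δ*(‖fi‖)^2 + μk*(‖bki‖)^2
     + 2*δ*μk*((starRingEnd ℂ) fk * fi * (starRingEnd ℂ) bki).re)*ρ^2*μi
  + (ρ^2*δ*μi*(‖fi‖)^2 + 2*μi*(1-ρ^2) + 2)*δ*μk*(‖fk‖)^2

/-- Coefficient `z_{ki,2}`. -/
def zki2 (μk μi δ ρ ι : ℝ) : ℝ :=
  ((δ+1)*μk + (δ+1)^2 - ι^2*δ^2)*(μi+1) - (μk+δ+1-ι^2*δ)*ρ^2*δ*μi - 1

/-- Coefficient `z_{ki,3}`. -/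
def zki3 (μk μi δ ρ ι : ℝ) (fk fi : ℂ) : ℝ :=
  ((1-ι^2)*δ*(μi+1-ρ^2*μi) + μi+1)*δ*μk*(‖fk‖)^2
  + ((μi+1)*(μk+2*δ+1) - (μk+2*δ)*ρ^2*μi)*(1-ι^2)
  + (μk+δ+1-ι^2*δ)*ρ^2*δ*μi*(‖fi‖)^2

/-- Coefficient `z_{ki,4}`. -/
def zki4 (μk μi δ ρ ι : ℝ) (fk fi bki : ℂ) : ℝ :=
  ((δ*(‖fi‖)^2-2)*ρ^2*μi + 2*μi + 2)*(1-ι^2)*δ*μk*(‖fk‖)^2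
  + (1-ι^2)*ρ^2*μk*μi*((‖bki‖)^2
     + 2*δ*((starRingEnd ℂ) fk * fi * (starRingEnd ℂ) bki).re)
  + 2*(1-ι^2)*ρ^2*δ*μi*(‖fi‖)^2

/-- The closed-form interference second moment `γ_{ki}`. -/
def gammaKI (M N : ℕ) (αk αi μk μi β δ ρ ι κ : ℝ) (fk fi bki : ℂ) : ℝ :=
  (κ^2*β^2*αk*αi*(M:ℝ)/((δ+1)^2*(μk+1)*(μi+1)))
    * (zki1 N μk μi δ ρ fk fi bki * ι^2 * (M:ℝ) + zki2 μk μi δ ρ ι * (N:ℝ)^2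
       + zki3 μk μi δ ρ ι fk fi * (N:ℝ) + zki4 μk μi δ ρ ι fk fi bki)

/-- The quantity `ϖ_k`. -/
def varpiK (N : ℕ) (αk μk β δ : ℝ) (fk : ℂ) : ℝ :=
  (β*αk/((δ+1)*(μk+1))) * (δ*μk*(‖fk‖)^2 + (μk+δ+1)*(N:ℝ))

/-- The quantity `ζ`. -/
def zetaV (K N : ℕ) (p α μ : Fin K → ℝ) (β δ ρ κ : ℝ) (f : Fin K → ℂ) : ℝ :=
  ∑ s, (κ^2 * p s * β * α s / ((δ+1)*(μ s + 1)))
    * (ρ^2*δ*(μ s)*(‖f s‖)^2 + ((1-ρ^2)*δ*(μ s) + δ + μ s + 1)*(N:ℝ))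

/-- The closed-form approximate rate `R̃_k`. -/
def Rtilde (K : ℕ) (k : Fin K) (M N : ℕ) (p α μ : Fin K → ℝ)
    (β δ ρ ι κ τ σ2 σRF2 : ℝ) (f : Fin K → ℂ) (b : Fin K → ℂ) : ℝ :=
  Real.logb 2 (1 + p k * τ^2 * xiK M N (α k) (μ k) β δ ρ ι κ (f k) /
    ((∑ i ∈ Finset.univ.erase k,
        p i * τ^2 * gammaKI M N (α k) (α i) (μ k) (μ i) β δ ρ ι κ (f k) (f i) (b i))
     + τ*(1-τ) * varpiK N (α k) (μ k) β δ (f k) * zetaV K N p α μ β δ ρ κ f * (M:ℝ)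
     + τ*(σRF2+σ2) * varpiK N (α k) (μ k) β δ (f k) * (M:ℝ)))

/-- The coefficient `Γ_k` of Corollary 3 / the power scaling law. -/
def GammaK (N : ℕ) (αk μk β δ ρ ι κ τ : ℝ) (fk : ℂ) : ℝ :=
  τ^2*ι^2*κ^2*β^2*αk^2 * ck1 N μk δ ρ fk / ((δ+1)^2*(μk+1)^2)

/-- The coefficient `Γ_{ki}` of Corollary 3 / the power scaling law. -/
def GammaKI (N : ℕ) (αk αi μk μi β δ ρ ι κ τ : ℝ) (fk fi bki : ℂ) : ℝ :=
  τ^2*ι^2*κ^2*β^2*αk*αi * zki1 N μk μi δ ρ fk fi bki / ((δ+1)^2*(μk+1)*(μi+1))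

section OHelpers
open Asymptotics

abbrev natPow (j : ℕ) : ℕ → ℝ := fun N => (N:ℝ)^j

lemma obase {j l : ℕ} (h : j ≤ l) : natPow j =O[atTop] natPow l := by
  rw [Asymptotics.isBigO_iff]
  refine ⟨1, ?_⟩
  filter_upwards [eventually_ge_atTop 1] with N hN
  have h1 : (1:ℝ) ≤ (N:ℝ) := by exact_mod_cast hN
  have h0 : (0:ℝ) ≤ (N:ℝ) := by linarith
  simp only [natPow, one_mul, Real.norm_eq_abs, abs_pow, Nat.abs_cast]
  exact pow_le_pow_right₀ h1 h

lemma oconst (c : ℝ) (l : ℕ) : (fun _ : ℕ => c) =O[atTop] natPow l := by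
  rw [Asymptotics.isBigO_iff]
  refine ⟨|c|, ?_⟩
  filter_upwards [eventually_ge_atTop 1] with N hN
  have h1 : (1:ℝ) ≤ (N:ℝ) := by exact_mod_cast hN
  have h2 : (1:ℝ) ≤ (N:ℝ)^l := by simpa using pow_le_pow_left₀ zero_le_one h1 l
  simp only [natPow, Real.norm_eq_abs, abs_pow, Nat.abs_cast]
  nlinarith [abs_nonneg c]

lemma obound {g : ℕ → ℝ} {c : ℝ} {l : ℕ} (h : ∀ᶠ N in atTop, |g N| ≤ c * (N:ℝ)^l) :
    g =O[atTop] natPow l := by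
  rw [Asymptotics.isBigO_iff]
  refine ⟨c, ?_⟩
  filter_upwards [h, eventually_ge_atTop 1] with N hN h1
  have h0 : (0:ℝ) ≤ (N:ℝ) := Nat.cast_nonneg N
  simp only [natPow, Real.norm_eq_abs, abs_pow, Nat.abs_cast]
  exact hN

lemma omul {f g : ℕ → ℝ} {j l m : ℕ} (hf : f =O[atTop] natPow j) (hg : g =O[atTop] natPow l)
    (hm : j + l ≤ m) : (fun N => f N * g N) =O[atTop] natPow m := by
  have h1 : (fun N : ℕ => ((N:ℝ))^j * ((N:ℝ))^l) = natPow (j+l) := by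
    funext N; rw [← pow_add]
  exact ((hf.mul hg).trans (h1 ▸ obase hm))

lemma oconst_mul {g : ℕ → ℝ} {l m : ℕ} (c : ℝ) (h : g =O[atTop] natPow l) (hm : l ≤ m) :
    (fun N => c * g N) =O[atTop] natPow m := (h.const_mul_left c).trans (obase hm)

lemma omul_const {g : ℕ → ℝ} {l m : ℕ} (c : ℝ) (h : g =O[atTop] natPow l) (hm : l ≤ m) :
    (fun N => g N * c) =O[atTop] natPow m := by
  have := (h.const_mul_left c).trans (obase hm)
  exact this.congr' (by filter_upwards with N using mul_comm c (g N)) (by rfl)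

lemma olittle {j l : ℕ} (h : j < l) : natPow j =o[atTop] natPow l :=
  (Asymptotics.isLittleO_pow_pow_atTop_of_lt h).comp_tendsto tendsto_natCast_atTop_atTop

lemma otendsto {g : ℕ → ℝ} {j l : ℕ} (hjl : j < l) (h : g =O[atTop] natPow j) :
    Tendsto (fun N => g N / (N:ℝ)^l) atTop (nhds 0) :=
  (h.trans_isLittleO (olittle hjl)).tendsto_div_nhds_zero

lemma hlp_poly (G : ℝ → ℝ) (hG : Continuous G) {g : ℕ → ℝ}
    (h : ∀ᶠ N in atTop, g N = G (1/(N:ℝ))) :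
    Tendsto g atTop (nhds (G 0)) :=
  Tendsto.congr' (by filter_upwards [h] with N hN using hN.symm)
    ((hG.tendsto 0).comp tendsto_one_div_atTop_nhds_zero_nat)

end OHelpers

def Gxi (M : ℕ) (αk μk β δ ρ ι κ : ℝ) (u : ℝ) : ℝ :=
  (β^2*αk^2*κ^2*(M:ℝ)/((δ+1)^2*(μk+1)^2)) *
  ( ((ρ^2*(μk+δ+1)^2 + (1-ρ^2)*δ^2*μk + δ^2)*u^2
      + (((2*μk+3*δ+2-δ*μk)*ρ^2 + (1+μk)*δ)*δ*μk
         + ((μk+δ+2)^2 - ρ^2*(μk+δ+1)^2 - 2*ρ^2*δ*μk - 2)*u^2)*u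
      + ρ^2*δ^2*μk^2 + 2*((1-ρ^2)*(μk+δ)+2)*δ*μk*u^2) * ι^2 * (M:ℝ)
    + ck2 μk δ ρ ι * u^2
    + ( (((3-2*ι^2)*(μk+1) + (ι^2-1)*δ*(μk-3))*ρ^2 + (δ+1-ι^2*δ)*(μk+1))*δ*μk
        + (((ι^2-1)*(μk+δ+1)^2 + 2*(ι^2-2)*μk*δ)*ρ^2
           + (1-ι^2)*(μk+δ+2)^2 + 2*μk*δ + 2*μk + 2*δ - 1 - 2*ι^2)*u^2 )*u
    + ((1-ι^2)*ρ^2*δ^2*μk^2 + 2*δ*μk*((1-ι^2)*(1-ρ^2)*(μk+δ+1) + (2-ι^2)*(1+ρ^2))*u^2) )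

lemma Gxi_cont (M : ℕ) (αk μk β δ ρ ι κ : ℝ) : Continuous (Gxi M αk μk β δ ρ ι κ) := by
  unfold Gxi; fun_prop

lemma xiK_div (M N : ℕ) (αk μk β δ ρ ι κ : ℝ) (fk : ℂ) (hN : 1 ≤ N)
    (hfk : ‖fk‖ = N) :
    xiK M N αk μk β δ ρ ι κ fk / (N:ℝ)^4 = Gxi M αk μk β δ ρ ι κ (1/(N:ℝ)) := by
  have hN0 : (N:ℝ) ≠ 0 := Nat.cast_ne_zero.2 (by omega)
  have key : ck1 N μk δ ρ fk * ι^2 * (M:ℝ) + ck2 μk δ ρ ι * (N:ℝ)^2 + ck3 μk δ ρ ι fk * (N:ℝ)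
       + ck4 μk δ ρ ι fk =
      (((ρ^2*(μk+δ+1)^2 + (1-ρ^2)*δ^2*μk + δ^2)*(1/(N:ℝ))^2
      + (((2*μk+3*δ+2-δ*μk)*ρ^2 + (1+μk)*δ)*δ*μk
         + ((μk+δ+2)^2 - ρ^2*(μk+δ+1)^2 - 2*ρ^2*δ*μk - 2)*(1/(N:ℝ))^2)*(1/(N:ℝ))
      + ρ^2*δ^2*μk^2 + 2*((1-ρ^2)*(μk+δ)+2)*δ*μk*(1/(N:ℝ))^2) * ι^2 * (M:ℝ)
    + ck2 μk δ ρ ι * (1/(N:ℝ))^2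
    + ( (((3-2*ι^2)*(μk+1) + (ι^2-1)*δ*(μk-3))*ρ^2 + (δ+1-ι^2*δ)*(μk+1))*δ*μk
        + (((ι^2-1)*(μk+δ+1)^2 + 2*(ι^2-2)*μk*δ)*ρ^2
           + (1-ι^2)*(μk+δ+2)^2 + 2*μk*δ + 2*μk + 2*δ - 1 - 2*ι^2)*(1/(N:ℝ))^2 )*(1/(N:ℝ))
    + ((1-ι^2)*ρ^2*δ^2*μk^2 + 2*δ*μk*((1-ι^2)*(1-ρ^2)*(μk+δ+1) + (2-ι^2)*(1+ρ^2))*(1/(N:ℝ))^2)) * (N:ℝ)^4 := by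
    simp only [ck1, ck3, ck4, hfk]
    field_simp
    ring
  rw [xiK, Gxi, key, mul_div_assoc, mul_div_cancel_right₀ _ (pow_ne_zero 4 hN0)]

set_option maxHeartbeats 2000000 in
/-- Corollary 1: RIS aligned to user `k`; as `N → ∞` the closed-form
rate tends to `log₂(τι²M/(1−τ) + (1−ι²τ)/(1−τ))`. -/
theorem corollary1_aligned_N_to_infinity
    (K : ℕ) (hK : 2 ≤ K) (k : Fin K)
    (α μ : Fin K → ℝ) (β δ ρ ι κ τ σ2 σRF2 : ℝ)
    (hα : ∀ i, 0 < α i) (hμ : ∀ i, 0 < μ i)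
    (hβ : 0 < β) (hδ : 0 < δ)
    (hρ : ρ ∈ Set.Ioo (0:ℝ) 1) (hι : ι ∈ Set.Ioc (0:ℝ) 1) (hκ : κ ∈ Set.Ioc (0:ℝ) 1)
    (hτ : τ ∈ Set.Ioo (0:ℝ) 1) (hσ : 0 < σ2) (hσRF : 0 < σRF2)
    (p : Fin K → ℝ) (hp : ∀ i, 0 < p i)
    (M : ℕ) (hM : 0 < M)
    (f b : ℕ → Fin K → ℂ)
    (hf_adm : ∀ N, 1 ≤ N → ∀ i, ‖f N i‖ ≤ N)
    (hb_adm : ∀ N, 1 ≤ N → ∀ i, i ≠ k → ‖b N i‖ ≤ N)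
    (hfk : ∀ N, 1 ≤ N → ‖f N k‖ = N)
    (C : ℝ) (hC : 0 < C)
    (hfi : ∀ N, 1 ≤ N → ∀ i, i ≠ k → ‖f N i‖ ≤ C) :
    Tendsto (fun N : ℕ => Rtilde K k M N p α μ β δ ρ ι κ τ σ2 σRF2 (f N) (b N)) atTop
      (nhds (Real.logb 2 (τ*ι^2*(M:ℝ)/(1-τ) + (1-ι^2*τ)/(1-τ)))) := by

  obtain ⟨hρ0, hρ1⟩ := hρ
  obtain ⟨hι0, hι1⟩ := hι
  obtain ⟨hκ0, hκ1⟩ := hκ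
  obtain ⟨hτ0, hτ1⟩ := hτ
  have hδ1 : (0:ℝ) < δ + 1 := by linarith
  have hμk1 : (0:ℝ) < μ k + 1 := by linarith [hμ k]
  have hM0 : (0:ℝ) < (M:ℝ) := by exact_mod_cast hM
  have hM1 : (1:ℝ) ≤ (M:ℝ) := by exact_mod_cast hM
  -- big-O atoms
  have hOn1 : (fun N : ℕ => ((N:ℝ))) =O[atTop] natPow 1 := by
    refine obound (c := 1) ?_
    filter_upwards with N
    rw [pow_one, one_mul, Nat.abs_cast]
  have hOn2 : (fun N : ℕ => ((N:ℝ))^2) =O[atTop] natPow 2 := Asymptotics.isBigO_refl _ _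
  have hOw2 : (fun N : ℕ => (‖f N k‖)^2) =O[atTop] natPow 2 := by
    refine obound (c := 1) ?_
    filter_upwards [eventually_ge_atTop 1] with N hN
    have h1 := hf_adm N hN k
    have h0 : (0:ℝ) ≤ ‖f N k‖ := norm_nonneg _
    rw [one_mul, abs_of_nonneg (by positivity)]
    exact pow_le_pow_left₀ h0 h1 2
  have hOx2 : ∀ i, i ≠ k → (fun N : ℕ => (‖f N i‖)^2) =O[atTop] natPow 0 := by
    intro i hik
    refine obound (c := C^2) ?_
    filter_upwards [eventually_ge_atTop 1] with N hN
    have h1 := hfi N hN i hik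
    rw [pow_zero, mul_one, abs_of_nonneg (by positivity)]
    exact pow_le_pow_left₀ (norm_nonneg _) h1 2
  have hOy2 : ∀ i, i ≠ k → (fun N : ℕ => (‖b N i‖)^2) =O[atTop] natPow 2 := by
    intro i hik
    refine obound (c := 1) ?_
    filter_upwards [eventually_ge_atTop 1] with N hN
    have h1 := hb_adm N hN i hik
    rw [one_mul, abs_of_nonneg (by positivity)]
    exact pow_le_pow_left₀ (norm_nonneg _) h1 2
  have hOre : ∀ i, i ≠ k →
      (fun N : ℕ => (((starRingEnd ℂ) (f N k)) * f N i * ((starRingEnd ℂ) (b N i))).re)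
        =O[atTop] natPow 2 := by
    intro i hik
    refine obound (c := C) ?_
    filter_upwards [eventually_ge_atTop 1] with N hN
    have hr1 : |(((starRingEnd ℂ) (f N k)) * f N i * ((starRingEnd ℂ) (b N i))).re| ≤
        ‖f N k‖ * ‖f N i‖ * ‖b N i‖ := by
      refine (Complex.abs_re_le_norm _).trans ?_
      rw [norm_mul, norm_mul, Complex.norm_conj, Complex.norm_conj]
    refine hr1.trans ?_
    have h2 := hf_adm N hN k
    have h3 := hfi N hN i hik
    have h4 := hb_adm N hN i hik
    have h5 : ‖f N k‖ * ‖f N i‖ ≤ (N:ℝ) * C :=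
      mul_le_mul h2 h3 (norm_nonneg _) (Nat.cast_nonneg N)
    have h6 : ‖f N k‖ * ‖f N i‖ * ‖b N i‖ ≤ ((N:ℝ) * C) * (N:ℝ) :=
      mul_le_mul h5 h4 (norm_nonneg _) (by positivity)
    exact h6.trans (le_of_eq (by ring))
  -- big-O of the z coefficients
  have hz1 : ∀ i, i ≠ k →
      (fun N : ℕ => zki1 N (μ k) (μ i) δ ρ (f N k) (f N i) (b N i)) =O[atTop] natPow 3 := by
    intro i hik
    simp only [zki1]
    refine ((Asymptotics.IsBigO.add (Asymptotics.IsBigO.add ?_ ?_) ?_).add ?_)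
    · exact oconst_mul _ hOn2 (by norm_num)
    · refine omul (j := 2) (l := 1) ?_ hOn1 (by norm_num)
      refine ((Asymptotics.IsBigO.add (Asymptotics.IsBigO.add ?_ ?_) ?_).add ?_)
      · exact oconst_mul _ hOw2 (le_refl 2)
      · exact oconst_mul _ (hOx2 i hik) (by norm_num)
      · exact oconst _ 2
      · exact oconst _ 2
    · refine omul_const (l := 2) _ ?_ (by norm_num)
      refine omul_const (l := 2) _ ?_ (by norm_num)
      refine (Asymptotics.IsBigO.add (Asymptotics.IsBigO.add ?_ ?_) ?_)
      · exact oconst_mul _ (hOx2 i hik) (by norm_num)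
      · exact oconst_mul _ (hOy2 i hik) (le_refl 2)
      · exact oconst_mul _ (hOre i hik) (le_refl 2)
    · refine omul (j := 0) (l := 2) ?_ hOw2 (by norm_num)
      refine omul_const (l := 0) _ ?_ (by norm_num)
      refine omul_const (l := 0) _ ?_ (by norm_num)
      refine (Asymptotics.IsBigO.add (Asymptotics.IsBigO.add ?_ ?_) ?_)
      · exact oconst_mul _ (hOx2 i hik) (by norm_num)
      · exact oconst _ 0
      · exact oconst _ 0
  have hz3 : ∀ i, i ≠ k →
      (fun N : ℕ => zki3 (μ k) (μ i) δ ρ ι (f N k) (f N i)) =O[atTop] natPow 2 := by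
    intro i hik
    simp only [zki3]
    refine (Asymptotics.IsBigO.add (Asymptotics.IsBigO.add ?_ ?_) ?_)
    · exact oconst_mul _ hOw2 (le_refl 2)
    · exact oconst _ 2
    · exact oconst_mul _ (hOx2 i hik) (by norm_num)
  have hz4 : ∀ i, i ≠ k →
      (fun N : ℕ => zki4 (μ k) (μ i) δ ρ ι (f N k) (f N i) (b N i)) =O[atTop] natPow 2 := by
    intro i hik
    simp only [zki4]
    refine (Asymptotics.IsBigO.add (Asymptotics.IsBigO.add ?_ ?_) ?_)
    · refine omul (j := 0) (l := 2) ?_ hOw2 (by norm_num)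
      refine omul_const (l := 0) _ ?_ (by norm_num)
      refine omul_const (l := 0) _ ?_ (by norm_num)
      refine omul_const (l := 0) _ ?_ (by norm_num)
      refine (Asymptotics.IsBigO.add (Asymptotics.IsBigO.add ?_ ?_) ?_)
      · refine omul_const (l := 0) _ ?_ (by norm_num)
        refine omul_const (l := 0) _ ?_ (by norm_num)
        exact (oconst_mul _ (hOx2 i hik) (by norm_num)).sub (oconst _ 0)
      · exact oconst _ 0
      · exact oconst _ 0
    · refine oconst_mul (l := 2) _ ?_ (by norm_num)
      exact (hOy2 i hik).add (oconst_mul _ (hOre i hik) (le_refl 2))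
    · exact oconst_mul _ (hOx2 i hik) (by norm_num)
  have hOγ : ∀ i, i ≠ k →
      (fun N : ℕ => p i * τ^2 *
        gammaKI M N (α k) (α i) (μ k) (μ i) β δ ρ ι κ (f N k) (f N i) (b N i))
        =O[atTop] natPow 3 := by
    intro i hik
    simp only [gammaKI]
    refine oconst_mul _ (oconst_mul _ ?_ (le_refl 3)) (le_refl 3)
    refine ((Asymptotics.IsBigO.add (Asymptotics.IsBigO.add ?_ ?_) ?_).add ?_)
    · exact omul_const _ (omul_const _ (hz1 i hik) (le_refl 3)) (le_refl 3)
    · exact oconst_mul _ hOn2 (by norm_num)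
    · exact omul (hz3 i hik) hOn1 (by norm_num)
    · exact (hz4 i hik).trans (obase (by norm_num))
  -- the interference term tends to 0
  have hSint : Tendsto (fun N : ℕ =>
      (∑ i ∈ Finset.univ.erase k, p i * τ^2 *
        gammaKI M N (α k) (α i) (μ k) (μ i) β δ ρ ι κ (f N k) (f N i) (b N i)) / (N:ℝ)^4)
      atTop (nhds 0) := by
    have h0 : Tendsto (fun N : ℕ =>
        ∑ i ∈ Finset.univ.erase k, (p i * τ^2 *
          gammaKI M N (α k) (α i) (μ k) (μ i) β δ ρ ι κ (f N k) (f N i) (b N i)) / (N:ℝ)^4)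
        atTop (nhds (∑ _i ∈ Finset.univ.erase k, (0:ℝ))) := by
      refine tendsto_finset_sum _ fun i hi => ?_
      exact otendsto (by norm_num) (hOγ i (Finset.mem_erase.1 hi).1)
    simp only [Finset.sum_const, smul_zero] at h0
    exact h0.congr fun N => (Finset.sum_div _ _ _).symm
  -- the ϖ_k limit
  have hvarpi : Tendsto (fun N : ℕ => varpiK N (α k) (μ k) β δ (f N k) / (N:ℝ)^2) atTop
      (nhds (β*(α k)/((δ+1)*((μ k)+1)) * (δ*(μ k)))) := by
    have h := hlp_poly (fun u => β*(α k)/((δ+1)*((μ k)+1)) * (δ*(μ k) + ((μ k)+δ+1)*u))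
      (by fun_prop) (g := fun N : ℕ => varpiK N (α k) (μ k) β δ (f N k) / (N:ℝ)^2) ?_
    · simpa using h
    · filter_upwards [eventually_ge_atTop 1] with N hN
      have hN0 : ((N:ℝ)) ≠ 0 := Nat.cast_ne_zero.2 (by omega)
      simp only [varpiK, hfk N hN]
      field_simp
  -- the ζ limit
  have hzeta : Tendsto (fun N : ℕ => zetaV K N p α μ β δ ρ κ (f N) / (N:ℝ)^2) atTop
      (nhds (κ^2*(p k)*β*(α k)/((δ+1)*((μ k)+1)) * (ρ^2*δ*(μ k)))) := by
    have heq : (fun N : ℕ => zetaV K N p α μ β δ ρ κ (f N) / (N:ℝ)^2) = fun N : ℕ =>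
        (∑ s ∈ Finset.univ.erase k, ((κ^2 * p s * β * α s / ((δ+1)*(μ s + 1)))
          * (ρ^2*δ*(μ s)*(‖f N s‖)^2
             + ((1-ρ^2)*δ*(μ s) + δ + μ s + 1)*(N:ℝ)))/(N:ℝ)^2)
        + ((κ^2 * p k * β * α k / ((δ+1)*(μ k + 1)))
          * (ρ^2*δ*(μ k)*(‖f N k‖)^2
             + ((1-ρ^2)*δ*(μ k) + δ + μ k + 1)*(N:ℝ)))/(N:ℝ)^2 := by
      funext N
      rw [zetaV, ← Finset.sum_erase_add _ _ (Finset.mem_univ k), add_div, Finset.sum_div]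
    rw [heq]
    have h1 : Tendsto (fun N : ℕ =>
        ∑ s ∈ Finset.univ.erase k, ((κ^2 * p s * β * α s / ((δ+1)*(μ s + 1)))
          * (ρ^2*δ*(μ s)*(‖f N s‖)^2
             + ((1-ρ^2)*δ*(μ s) + δ + μ s + 1)*(N:ℝ)))/(N:ℝ)^2) atTop
        (nhds (∑ _s ∈ Finset.univ.erase k, (0:ℝ))) := by
      refine tendsto_finset_sum _ fun s hs => ?_
      refine otendsto (j := 1) (by norm_num) ?_
      refine oconst_mul (l := 1) _ ?_ (le_refl 1)
      refine Asymptotics.IsBigO.add ?_ ?_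
      · exact oconst_mul _ (hOx2 s (Finset.mem_erase.1 hs).1) (by norm_num)
      · exact oconst_mul _ hOn1 (le_refl 1)
    have h2 : Tendsto (fun N : ℕ =>
        ((κ^2 * p k * β * α k / ((δ+1)*(μ k + 1)))
          * (ρ^2*δ*(μ k)*(‖f N k‖)^2
             + ((1-ρ^2)*δ*(μ k) + δ + μ k + 1)*(N:ℝ)))/(N:ℝ)^2) atTop
        (nhds (κ^2*(p k)*β*(α k)/((δ+1)*((μ k)+1)) * (ρ^2*δ*(μ k)))) := by
      have h := hlp_poly (fun u => κ^2*(p k)*β*(α k)/((δ+1)*((μ k)+1))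
          * (ρ^2*δ*(μ k) + ((1-ρ^2)*δ*(μ k) + δ + μ k + 1)*u)) (by fun_prop)
        (g := fun N : ℕ => ((κ^2 * p k * β * α k / ((δ+1)*(μ k + 1)))
          * (ρ^2*δ*(μ k)*(‖f N k‖)^2
             + ((1-ρ^2)*δ*(μ k) + δ + μ k + 1)*(N:ℝ)))/(N:ℝ)^2) ?_
      · simpa using h
      · filter_upwards [eventually_ge_atTop 1] with N hN
        have hN0 : ((N:ℝ)) ≠ 0 := Nat.cast_ne_zero.2 (by omega)
        rw [hfk N hN]
        field_simp
    simpa using h1.add h2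
  -- the numerator limit
  have hxi : Tendsto (fun N : ℕ => xiK M N (α k) (μ k) β δ ρ ι κ (f N k) / (N:ℝ)^4) atTop
      (nhds (Gxi M (α k) (μ k) β δ ρ ι κ 0)) := by
    refine hlp_poly _ (Gxi_cont M (α k) (μ k) β δ ρ ι κ) ?_
    filter_upwards [eventually_ge_atTop 1] with N hN
    exact xiK_div M N (α k) (μ k) β δ ρ ι κ (f N k) hN (hfk N hN)
  have hnum : Tendsto (fun N : ℕ =>
      (p k * τ^2 * xiK M N (α k) (μ k) β δ ρ ι κ (f N k)) / (N:ℝ)^4) atTop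
      (nhds (p k * τ^2 * Gxi M (α k) (μ k) β δ ρ ι κ 0)) := by
    have h := hxi.const_mul (p k * τ^2)
    exact (h.congr fun N => by ring).mono_left le_rfl
  -- the denominator limit
  have hT1 : Tendsto (fun N : ℕ => τ*(1-τ) * (varpiK N (α k) (μ k) β δ (f N k) / (N:ℝ)^2)
      * (zetaV K N p α μ β δ ρ κ (f N) / (N:ℝ)^2) * (M:ℝ)) atTop
      (nhds (τ*(1-τ) * (β*(α k)/((δ+1)*((μ k)+1)) * (δ*(μ k)))
        * (κ^2*(p k)*β*(α k)/((δ+1)*((μ k)+1)) * (ρ^2*δ*(μ k))) * (M:ℝ))) :=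
    ((hvarpi.const_mul (τ*(1-τ))).mul hzeta).mul_const (M:ℝ)
  have hT2 : Tendsto (fun N : ℕ => τ*(σRF2+σ2) * (varpiK N (α k) (μ k) β δ (f N k) / (N:ℝ)^2)
      * (M:ℝ) * ((1:ℝ)/(N:ℝ))^2) atTop (nhds 0) := by
    have h := ((hvarpi.const_mul (τ*(σRF2+σ2))).mul_const (M:ℝ)).mul
      (tendsto_one_div_atTop_nhds_zero_nat.pow 2)
    simpa using h
  have hden : Tendsto (fun N : ℕ =>
      ((∑ i ∈ Finset.univ.erase k, p i * τ^2 *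
          gammaKI M N (α k) (α i) (μ k) (μ i) β δ ρ ι κ (f N k) (f N i) (b N i))
        + τ*(1-τ) * varpiK N (α k) (μ k) β δ (f N k) * zetaV K N p α μ β δ ρ κ (f N) * (M:ℝ)
        + τ*(σRF2+σ2) * varpiK N (α k) (μ k) β δ (f N k) * (M:ℝ)) / (N:ℝ)^4) atTop
      (nhds (τ*(1-τ) * (β*(α k)/((δ+1)*((μ k)+1)) * (δ*(μ k)))
        * (κ^2*(p k)*β*(α k)/((δ+1)*((μ k)+1)) * (ρ^2*δ*(μ k))) * (M:ℝ))) := by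
    have hsum := (hSint.add hT1).add hT2
    refine Tendsto.congr' ?_ (by simpa only [zero_add, add_zero] using hsum)
    filter_upwards [eventually_ge_atTop 1] with N hN
    have hN0 : ((N:ℝ)) ≠ 0 := Nat.cast_ne_zero.2 (by omega)
    field_simp
    simp only [mul_comm (τ ^ 2) (p _)]
  -- positivity of the limits
  have hA1pos : (0:ℝ) < β*(α k)/((δ+1)*((μ k)+1)) * (δ*(μ k)) :=
    mul_pos (div_pos (mul_pos hβ (hα k)) (mul_pos hδ1 hμk1)) (mul_pos hδ (hμ k))
  have hA2pos : (0:ℝ) < κ^2*(p k)*β*(α k)/((δ+1)*((μ k)+1)) * (ρ^2*δ*(μ k)) := by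
    refine mul_pos (div_pos ?_ (mul_pos hδ1 hμk1)) ?_
    · exact mul_pos (mul_pos (mul_pos (pow_pos hκ0 2) (hp k)) hβ) (hα k)
    · exact mul_pos (mul_pos (pow_pos hρ0 2) hδ) (hμ k)
  have hBpos : (0:ℝ) < τ*(1-τ) * (β*(α k)/((δ+1)*((μ k)+1)) * (δ*(μ k)))
      * (κ^2*(p k)*β*(α k)/((δ+1)*((μ k)+1)) * (ρ^2*δ*(μ k))) * (M:ℝ) := by
    have h1 : (0:ℝ) < τ*(1-τ) := mul_pos hτ0 (by linarith)
    exact mul_pos (mul_pos (mul_pos h1 hA1pos) hA2pos) hM0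
  have hGxi0 : Gxi M (α k) (μ k) β δ ρ ι κ 0 =
      (β^2*(α k)^2*κ^2*(M:ℝ)/((δ+1)^2*((μ k)+1)^2))
        * (ρ^2*δ^2*(μ k)^2*ι^2*(M:ℝ) + (1-ι^2)*ρ^2*δ^2*(μ k)^2) := by
    simp only [Gxi]
    ring
  have hApos : (0:ℝ) < p k * τ^2 * Gxi M (α k) (μ k) β δ ρ ι κ 0 := by
    rw [hGxi0]
    have hP : (0:ℝ) < ρ^2*δ^2*(μ k)^2 :=
      mul_pos (mul_pos (pow_pos hρ0 2) (pow_pos hδ 2)) (pow_pos (hμ k) 2)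
    have hPι : (0:ℝ) ≤ ρ^2*δ^2*(μ k)^2*ι^2*((M:ℝ)-1) :=
      mul_nonneg (mul_nonneg hP.le (sq_nonneg ι)) (by linarith)
    have hι2 : ι^2 ≤ 1 := by nlinarith
    refine mul_pos (mul_pos (hp k) (pow_pos hτ0 2)) (mul_pos ?_ ?_)
    · refine div_pos ?_ ?_
      · exact mul_pos (mul_pos (mul_pos (pow_pos hβ 2) (pow_pos (hα k) 2)) (pow_pos hκ0 2)) hM0
      · exact mul_pos (pow_pos hδ1 2) (pow_pos hμk1 2)
    · nlinarith
  -- combine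
  have hquot := hnum.div hden (ne_of_gt hBpos)
  have hfrac : Tendsto (fun N : ℕ =>
      p k * τ^2 * xiK M N (α k) (μ k) β δ ρ ι κ (f N k) /
        ((∑ i ∈ Finset.univ.erase k, p i * τ^2 *
            gammaKI M N (α k) (α i) (μ k) (μ i) β δ ρ ι κ (f N k) (f N i) (b N i))
          + τ*(1-τ) * varpiK N (α k) (μ k) β δ (f N k) * zetaV K N p α μ β δ ρ κ (f N) * (M:ℝ)
          + τ*(σRF2+σ2) * varpiK N (α k) (μ k) β δ (f N k) * (M:ℝ))) atTop
      (nhds ((p k * τ^2 * Gxi M (α k) (μ k) β δ ρ ι κ 0) /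
        (τ*(1-τ) * (β*(α k)/((δ+1)*((μ k)+1)) * (δ*(μ k)))
          * (κ^2*(p k)*β*(α k)/((δ+1)*((μ k)+1)) * (ρ^2*δ*(μ k))) * (M:ℝ)))) := by
    refine hquot.congr' ?_
    filter_upwards [eventually_ge_atTop 1] with N hN
    have hN4 : ((N:ℝ))^4 ≠ 0 := pow_ne_zero 4 (Nat.cast_ne_zero.2 (by omega))
    set a := p k * τ^2 * xiK M N (α k) (μ k) β δ ρ ι κ (f N k)
    set d := (∑ i ∈ Finset.univ.erase k, p i * τ^2 *
          gammaKI M N (α k) (α i) (μ k) (μ i) β δ ρ ι κ (f N k) (f N i) (b N i))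
        + τ*(1-τ) * varpiK N (α k) (μ k) β δ (f N k) * zetaV K N p α μ β δ ρ κ (f N) * (M:ℝ)
        + τ*(σRF2+σ2) * varpiK N (α k) (μ k) β δ (f N k) * (M:ℝ)
    show a / (N:ℝ)^4 / (d / (N:ℝ)^4) = a / d
    rcases eq_or_ne d 0 with hd | hd
    · simp [hd]
    · field_simp
  have h1frac := hfrac.const_add 1
  have hTpos : (0:ℝ) < 1 + (p k * τ^2 * Gxi M (α k) (μ k) β δ ρ ι κ 0) /
      (τ*(1-τ) * (β*(α k)/((δ+1)*((μ k)+1)) * (δ*(μ k)))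
        * (κ^2*(p k)*β*(α k)/((δ+1)*((μ k)+1)) * (ρ^2*δ*(μ k))) * (M:ℝ)) := by
    have := div_pos hApos hBpos
    linarith
  have hdiv : (p k * τ^2 * Gxi M (α k) (μ k) β δ ρ ι κ 0) /
      (τ*(1-τ) * (β*(α k)/((δ+1)*((μ k)+1)) * (δ*(μ k)))
        * (κ^2*(p k)*β*(α k)/((δ+1)*((μ k)+1)) * (ρ^2*δ*(μ k))) * (M:ℝ)) =
      τ*(ι^2*(M:ℝ)+1-ι^2)/(1-τ) := by
    have h1τ : (1:ℝ) - τ ≠ 0 := by linarith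
    rw [div_eq_div_iff (ne_of_gt hBpos) h1τ, hGxi0]
    field_simp [hδ1.ne', hμk1.ne']
    ring
  have harg : τ*ι^2*(M:ℝ)/(1-τ) + (1-ι^2*τ)/(1-τ) =
      1 + (p k * τ^2 * Gxi M (α k) (μ k) β δ ρ ι κ 0) /
        (τ*(1-τ) * (β*(α k)/((δ+1)*((μ k)+1)) * (δ*(μ k)))
          * (κ^2*(p k)*β*(α k)/((δ+1)*((μ k)+1)) * (ρ^2*δ*(μ k))) * (M:ℝ)) := by
    rw [hdiv]
    have h1τ : (1:ℝ) - τ ≠ 0 := by linarith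
    field_simp
    ring
  have hlog := (h1frac.log (ne_of_gt hTpos)).div_const (Real.log 2)
  have hRt : (fun N : ℕ => Rtilde K k M N p α μ β δ ρ ι κ τ σ2 σRF2 (f N) (b N)) =
      fun N : ℕ => Real.log (1 + p k * τ^2 * xiK M N (α k) (μ k) β δ ρ ι κ (f N k) /
        ((∑ i ∈ Finset.univ.erase k, p i * τ^2 *
            gammaKI M N (α k) (α i) (μ k) (μ i) β δ ρ ι κ (f N k) (f N i) (b N i))
          + τ*(1-τ) * varpiK N (α k) (μ k) β δ (f N k) * zetaV K N p α μ β δ ρ κ (f N) * (M:ℝ)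
          + τ*(σRF2+σ2) * varpiK N (α k) (μ k) β δ (f N k) * (M:ℝ))) / Real.log 2 := by
    funext N
    simp only [Rtilde, Real.logb]
  rw [hRt, harg, Real.logb]
  exact hlog

end
end

section
/- (Corollary 2: no user aligned, M, N → ∞.) Let (M_t) and (N_t) be sequences of positive integers tending to infinity, and for each t let f_1(t),…,f_K(t) and b_{ki}(t) (i ≠ k) be admissible data such that there is a constant C > 0 with |f_i(t)| ≤ C for all i and all t, and |b_{ki}(t)|/N_t → 0 for every i ≠ k. Then the closed-form rate satisfies R̃_k(M_t, N_t) → log₂( 1 + ((ρ²/δ²)(μ_k+δ+1)² + μ_k + 1 − ρ²μ_k) / ( Σ_{i≠k} (p_iα_i(μ_k+1)/(p_kα_k(μ_i+1)))·(μ_i + 1 − ρ²μ_i) ) ) as t → ∞. -/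
open MeasureTheory ProbabilityTheory Filter Finset

noncomputable section
/-- Any continuous two-variable expression of bounded quantities is bounded. -/
lemma aux_bound' (C : ℝ) (hC : 0 ≤ C) (F : ℝ → ℝ → ℝ)
    (hF : Continuous fun q : ℝ × ℝ => F q.1 q.2) :
    ∃ D, ∀ x y, x ∈ Set.Icc (0:ℝ) C → y ∈ Set.Icc (0:ℝ) C → |F x y| ≤ D := by
  obtain ⟨z, hz, hmax⟩ := (isCompact_Icc.prod isCompact_Icc).exists_isMaxOn
    ((Set.nonempty_Icc.mpr hC).prod (Set.nonempty_Icc.mpr hC))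
    (continuous_abs.comp hF).continuousOn
  exact ⟨|F z.1 z.2|, fun x y hx hy => hmax (Set.mk_mem_prod hx hy)⟩

/-- bounded / (→ ∞) tends to zero. -/
lemma aux_div_zero' {g w : ℕ → ℝ} {D : ℝ} (hg : ∀ᶠ t in atTop, |g t| ≤ D)
    (hw : Tendsto w atTop atTop) :
    Tendsto (fun t => g t / w t) atTop (nhds 0) := by
  refine squeeze_zero_norm' ?_ ((tendsto_const_nhds (x := D)).div_atTop hw)
  filter_upwards [hg, hw.eventually_gt_atTop 0] with t h1 h2
  rw [Real.norm_eq_abs, abs_div, abs_of_pos h2]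
  exact div_le_div_of_nonneg_right h1 h2.le

lemma div_div_div_same' {a b c : ℝ} (hc : c ≠ 0) : (a / c) / (b / c) = a / b := by
  rcases eq_or_ne b 0 with rfl | hb
  · simp
  · field_simp

set_option maxHeartbeats 2000000 in
/-- Corollary 2: no user aligned; as `M, N → ∞` the closed-form rate
converges. -/
theorem corollary2_no_alignment_MN_to_infinity
    (K : ℕ) (hK : 2 ≤ K) (k : Fin K)
    (α μ : Fin K → ℝ) (β δ ρ ι κ τ σ2 σRF2 : ℝ)
    (hα : ∀ i, 0 < α i) (hμ : ∀ i, 0 < μ i)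
    (hβ : 0 < β) (hδ : 0 < δ)
    (hρ : ρ ∈ Set.Ioo (0:ℝ) 1) (hι : ι ∈ Set.Ioc (0:ℝ) 1) (hκ : κ ∈ Set.Ioc (0:ℝ) 1)
    (hτ : τ ∈ Set.Ioo (0:ℝ) 1) (hσ : 0 < σ2) (hσRF : 0 < σRF2)
    (p : Fin K → ℝ) (hp : ∀ i, 0 < p i)
    (Mt Nt : ℕ → ℕ) (hMt : Tendsto Mt atTop atTop) (hNt : Tendsto Nt atTop atTop)
    (f b : ℕ → Fin K → ℂ)
    (hf_adm : ∀ t i, ‖f t i‖ ≤ Nt t)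
    (hb_adm : ∀ t, ∀ i, i ≠ k → ‖b t i‖ ≤ Nt t)
    (C : ℝ) (hC : 0 < C) (hfC : ∀ t i, ‖f t i‖ ≤ C)
    (hb0 : ∀ i, i ≠ k →
      Tendsto (fun t => ‖b t i‖ / (Nt t : ℝ)) atTop (nhds 0)) :
    Tendsto (fun t : ℕ =>
        Rtilde K k (Mt t) (Nt t) p α μ β δ ρ ι κ τ σ2 σRF2 (f t) (b t)) atTop
      (nhds (Real.logb 2 (1 +
        ((ρ^2/δ^2)*(μ k+δ+1)^2 + μ k + 1 - ρ^2*μ k) /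
        (∑ i ∈ Finset.univ.erase k,
          (p i * α i * (μ k+1)/(p k * α k * (μ i+1))) * (μ i + 1 - ρ^2 * μ i))))) := by
  obtain ⟨hρ0, hρ1⟩ := hρ
  obtain ⟨hι0, hι1⟩ := hι
  obtain ⟨hκ0, hκ1⟩ := hκ
  obtain ⟨hτ0, hτ1⟩ := hτ
  have hρ2 : ρ^2 < 1 := by nlinarith
  have hδ1 : (0:ℝ) < δ + 1 := by linarith
  have hδ0 : δ ≠ 0 := ne_of_gt hδ
  have hμk1 : (0:ℝ) < μ k + 1 := by linarith [hμ k]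
  have hδ1ne : (δ+1:ℝ) ≠ 0 := hδ1.ne'
  have hμk1ne : (μ k+1:ℝ) ≠ 0 := hμk1.ne'
  have hu : Tendsto (fun t => ((Mt t : ℕ):ℝ)) atTop atTop :=
    tendsto_natCast_atTop_atTop.comp hMt
  have hv : Tendsto (fun t => ((Nt t : ℕ):ℝ)) atTop atTop :=
    tendsto_natCast_atTop_atTop.comp hNt
  have hv2 : Tendsto (fun t => ((Nt t:ℝ))^2) atTop atTop :=
    (hv.atTop_mul_atTop₀ hv).congr (fun t => (pow_two _).symm)
  have huv : Tendsto (fun t => (Mt t:ℝ) * (Nt t:ℝ)) atTop atTop := hu.atTop_mul_atTop₀ hv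
  have hu_inv : Tendsto (fun t => ((Mt t:ℝ))⁻¹) atTop (nhds 0) :=
    tendsto_inv_atTop_zero.comp hu
  have hv_inv : Tendsto (fun t => ((Nt t:ℝ))⁻¹) atTop (nhds 0) :=
    tendsto_inv_atTop_zero.comp hv
  have hmem : ∀ t i, ‖f t i‖ ∈ Set.Icc (0:ℝ) C :=
    fun t i => ⟨norm_nonneg _, hfC t i⟩
  -- limit of ck1 / N²
  have hck1 : Tendsto (fun t => ck1 (Nt t) (μ k) δ ρ (f t k) / (Nt t:ℝ)^2) atTop
      (nhds (ρ^2*(μ k+δ+1)^2 + (1-ρ^2)*δ^2*(μ k) + δ^2)) := by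
    obtain ⟨D1, hD1⟩ := aux_bound' C hC.le (fun x _ =>
      ((2*(μ k)+3*δ+2-δ*(μ k))*ρ^2 + (1+(μ k))*δ) * δ*(μ k)*x^2
        + ((μ k)+δ+2)^2 - ρ^2*((μ k)+δ+1)^2 - 2*ρ^2*δ*(μ k) - 2) (by fun_prop)
    obtain ⟨D2, hD2⟩ := aux_bound' C hC.le (fun x _ =>
      ρ^2*δ^2*(μ k)^2*x^4 + 2*((1-ρ^2)*((μ k)+δ)+2)*δ*(μ k)*x^2) (by fun_prop)
    have h1 : Tendsto (fun t =>
        (((2*(μ k)+3*δ+2-δ*(μ k))*ρ^2 + (1+(μ k))*δ) * δ*(μ k)*(‖f t k‖)^2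
          + ((μ k)+δ+2)^2 - ρ^2*((μ k)+δ+1)^2 - 2*ρ^2*δ*(μ k) - 2) / (Nt t:ℝ)) atTop (nhds 0) :=
      aux_div_zero' (Eventually.of_forall fun t => hD1 _ _ (hmem t k) (hmem t k)) hv
    have h2 : Tendsto (fun t =>
        (ρ^2*δ^2*(μ k)^2*(‖f t k‖)^4
          + 2*((1-ρ^2)*((μ k)+δ)+2)*δ*(μ k)*(‖f t k‖)^2) / (Nt t:ℝ)^2) atTop
        (nhds 0) :=
      aux_div_zero' (Eventually.of_forall fun t => hD2 _ _ (hmem t k) (hmem t k)) hv2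
    have hcomb := ((tendsto_const_nhds
      (x := ρ^2*(μ k+δ+1)^2 + (1-ρ^2)*δ^2*(μ k) + δ^2)).add h1).add h2
    simp only [add_zero] at hcomb
    refine Tendsto.congr' ?_ hcomb
    filter_upwards [hv.eventually_gt_atTop 0] with t ht
    have hne : ((Nt t:ℝ)) ≠ 0 := ne_of_gt ht
    simp only [ck1]
    field_simp
    ring
  -- limit of the scaled numerator
  have hNum : Tendsto (fun t => p k * τ^2 * xiK (Mt t) (Nt t) (α k) (μ k) β δ ρ ι κ (f t k)
      / ((Mt t:ℝ)^2*(Nt t:ℝ)^2)) atTop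
      (nhds (p k * τ^2 * (β^2*(α k)^2*κ^2/((δ+1)^2*(μ k+1)^2)) *
        (ι^2 * (ρ^2*(μ k+δ+1)^2 + (1-ρ^2)*δ^2*(μ k) + δ^2)))) := by
    obtain ⟨D3, hD3⟩ := aux_bound' C hC.le (fun x _ =>
      (((3-2*ι^2)*((μ k)+1) + (ι^2-1)*δ*((μ k)-3))*ρ^2 + (δ+1-ι^2*δ)*((μ k)+1)) * δ*(μ k)*x^2
      + ((ι^2-1)*((μ k)+δ+1)^2 + 2*(ι^2-2)*(μ k)*δ)*ρ^2
      + (1-ι^2)*((μ k)+δ+2)^2 + 2*(μ k)*δ + 2*(μ k) + 2*δ - 1 - 2*ι^2) (by fun_prop)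
    obtain ⟨D4, hD4⟩ := aux_bound' C hC.le (fun x _ =>
      (1-ι^2)*ρ^2*δ^2*(μ k)^2*x^4
      + 2*δ*(μ k)*x^2*((1-ι^2)*(1-ρ^2)*((μ k)+δ+1) + (2-ι^2)*(1+ρ^2))) (by fun_prop)
    have hc2 : Tendsto (fun t => ck2 (μ k) δ ρ ι * ((Mt t:ℝ))⁻¹) atTop (nhds 0) := by
      have := hu_inv.const_mul (ck2 (μ k) δ ρ ι)
      simpa using this
    have hc3 : Tendsto (fun t => ck3 (μ k) δ ρ ι (f t k) / ((Mt t:ℝ)*(Nt t:ℝ))) atTop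
        (nhds 0) :=
      aux_div_zero' (Eventually.of_forall fun t => hD3 _ _ (hmem t k) (hmem t k)) huv
    have hc4a : Tendsto (fun t => ck4 (μ k) δ ρ ι (f t k) / (Nt t:ℝ)^2) atTop (nhds 0) :=
      aux_div_zero' (Eventually.of_forall fun t => hD4 _ _ (hmem t k) (hmem t k)) hv2
    have hc4 : Tendsto (fun t => ck4 (μ k) δ ρ ι (f t k) / (Nt t:ℝ)^2 * ((Mt t:ℝ))⁻¹) atTop
        (nhds 0) := by simpa using hc4a.mul hu_inv
    have hbr := ((((hck1.const_mul (ι^2)).add hc2).add hc3).add hc4).const_mul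
      (p k * τ^2 * (β^2*(α k)^2*κ^2/((δ+1)^2*(μ k+1)^2)))
    simp only [add_zero] at hbr
    refine Tendsto.congr' ?_ hbr
    filter_upwards [hu.eventually_gt_atTop 0, hv.eventually_gt_atTop 0] with t htu htv
    have hneu : ((Mt t:ℝ)) ≠ 0 := ne_of_gt htu
    have hnev : ((Nt t:ℝ)) ≠ 0 := ne_of_gt htv
    simp only [xiK]
    field_simp
  -- per-interferer limits
  have hterm : ∀ i ∈ Finset.univ.erase k, Tendsto (fun t =>
      p i * τ^2 * gammaKI (Mt t) (Nt t) (α k) (α i) (μ k) (μ i) β δ ρ ι κ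
        (f t k) (f t i) (b t i) / ((Mt t:ℝ)^2*(Nt t:ℝ)^2)) atTop
      (nhds (p i * τ^2 * (κ^2*β^2*(α k)*(α i)/((δ+1)^2*(μ k+1)*(μ i+1))) *
        (ι^2 * ((μ i+1-ρ^2*(μ i))*δ^2)))) := by
    intro i hi
    have hik : i ≠ k := (Finset.mem_erase.mp hi).1
    have hμi1ne : (μ i+1:ℝ) ≠ 0 := (by linarith [hμ i] : (0:ℝ) < μ i+1).ne'
    have hb2 : Tendsto (fun t => (‖b t i‖)^2 / (Nt t:ℝ)^2) atTop (nhds 0) := by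
      have := (hb0 i hik).pow 2
      simpa [div_pow] using this
    have hRe : Tendsto (fun t =>
        ((starRingEnd ℂ) (f t k) * f t i * (starRingEnd ℂ) (b t i)).re / (Nt t:ℝ)^2) atTop
        (nhds 0) := by
      have hbd : Tendsto (fun t => C^2 * (‖b t i‖ / (Nt t:ℝ)) * ((Nt t:ℝ))⁻¹)
          atTop (nhds 0) := by
        simpa using ((hb0 i hik).const_mul (C^2)).mul hv_inv
      refine squeeze_zero_norm' ?_ hbd
      filter_upwards [hv.eventually_gt_atTop 0] with t ht
      have h2 : |((starRingEnd ℂ) (f t k) * f t i * (starRingEnd ℂ) (b t i)).re|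
          ≤ C^2 * ‖b t i‖ := by
        have e1 : ‖(starRingEnd ℂ) (f t k) * f t i * (starRingEnd ℂ) (b t i)‖
            = ‖f t k‖ * ‖f t i‖ * ‖b t i‖ := by
          simp [map_mul, Complex.norm_conj]
        have e2 : ‖f t k‖ * ‖f t i‖ * ‖b t i‖
            ≤ C * C * ‖b t i‖ := by
          have := mul_le_mul (mul_le_mul (hfC t k) (hfC t i) (norm_nonneg _) hC.le)
            (le_refl (‖b t i‖)) (norm_nonneg _)
            (mul_nonneg hC.le hC.le)
          exact this
        calc |((starRingEnd ℂ) (f t k) * f t i * (starRingEnd ℂ) (b t i)).re|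
            ≤ ‖(starRingEnd ℂ) (f t k) * f t i * (starRingEnd ℂ) (b t i)‖ :=
              Complex.abs_re_le_norm _
          _ ≤ C * C * ‖b t i‖ := by rw [e1]; exact e2
          _ = C^2 * ‖b t i‖ := by ring
      have he : C^2 * (‖b t i‖ / (Nt t:ℝ)) * ((Nt t:ℝ))⁻¹
          = C^2 * ‖b t i‖ / (Nt t:ℝ)^2 := by
        field_simp
      rw [Real.norm_eq_abs, abs_div, abs_of_pos (pow_pos ht 2), he]
      exact div_le_div_of_nonneg_right h2 (pow_pos ht 2).le
    obtain ⟨E1, hE1⟩ := aux_bound' C hC.le (fun x y =>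
      ((μ i)+1-ρ^2*(μ i))*δ^2*(μ k)*x^2 + ρ^2*δ^2*(μ i)*y^2
        + ((μ k)+2*δ+1)*((μ i)+1-ρ^2*(μ i)) + ρ^2*(μ i)) (by fun_prop)
    obtain ⟨E2, hE2⟩ := aux_bound' C hC.le (fun x y =>
      2*δ*y^2*ρ^2*(μ i) + (ρ^2*δ*(μ i)*y^2 + 2*(μ i)*(1-ρ^2) + 2)*δ*(μ k)*x^2) (by fun_prop)
    obtain ⟨E3, hE3⟩ := aux_bound' C hC.le (fun x y =>
      ((1-ι^2)*δ*((μ i)+1-ρ^2*(μ i)) + (μ i)+1)*δ*(μ k)*x^2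
        + (((μ i)+1)*((μ k)+2*δ+1) - ((μ k)+2*δ)*ρ^2*(μ i))*(1-ι^2)
        + ((μ k)+δ+1-ι^2*δ)*ρ^2*δ*(μ i)*y^2) (by fun_prop)
    obtain ⟨E4, hE4⟩ := aux_bound' C hC.le (fun x y =>
      ((δ*y^2-2)*ρ^2*(μ i) + 2*(μ i) + 2)*(1-ι^2)*δ*(μ k)*x^2
        + 2*(1-ι^2)*ρ^2*δ*(μ i)*y^2) (by fun_prop)
    have hz1 : Tendsto (fun t =>
        zki1 (Nt t) (μ k) (μ i) δ ρ (f t k) (f t i) (b t i) / (Nt t:ℝ)^2) atTop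
        (nhds ((μ i+1-ρ^2*(μ i))*δ^2)) := by
      have hA : Tendsto (fun t =>
          (((μ i)+1-ρ^2*(μ i))*δ^2*(μ k)*(‖f t k‖)^2
            + ρ^2*δ^2*(μ i)*(‖f t i‖)^2
            + ((μ k)+2*δ+1)*((μ i)+1-ρ^2*(μ i)) + ρ^2*(μ i)) / (Nt t:ℝ)) atTop (nhds 0) :=
        aux_div_zero' (Eventually.of_forall fun t => hE1 _ _ (hmem t k) (hmem t i)) hv
      have hB : Tendsto (fun t =>
          (2*δ*(‖f t i‖)^2*ρ^2*(μ i)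
            + (ρ^2*δ*(μ i)*(‖f t i‖)^2 + 2*(μ i)*(1-ρ^2) + 2)*δ*(μ k)
              *(‖f t k‖)^2) / (Nt t:ℝ)^2) atTop (nhds 0) :=
        aux_div_zero' (Eventually.of_forall fun t => hE2 _ _ (hmem t k) (hmem t i)) hv2
      have hcomb := ((((tendsto_const_nhds (x := (μ i+1-ρ^2*(μ i))*δ^2)).add hA).add hB).add
        (hb2.const_mul (ρ^2*(μ i)*(μ k)))).add (hRe.const_mul (2*δ*(μ k)*ρ^2*(μ i)))
      simp only [add_zero, mul_zero] at hcomb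
      refine Tendsto.congr' ?_ hcomb
      filter_upwards [hv.eventually_gt_atTop 0] with t ht
      have hne : ((Nt t:ℝ)) ≠ 0 := ne_of_gt ht
      simp only [zki1]
      field_simp
      ring
    have hz2 : Tendsto (fun t => zki2 (μ k) (μ i) δ ρ ι * ((Mt t:ℝ))⁻¹) atTop (nhds 0) := by
      have := hu_inv.const_mul (zki2 (μ k) (μ i) δ ρ ι)
      simpa using this
    have hz3 : Tendsto (fun t =>
        zki3 (μ k) (μ i) δ ρ ι (f t k) (f t i) / ((Mt t:ℝ)*(Nt t:ℝ))) atTop (nhds 0) :=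
      aux_div_zero' (Eventually.of_forall fun t => hE3 _ _ (hmem t k) (hmem t i)) huv
    have hz4a : Tendsto (fun t =>
        zki4 (μ k) (μ i) δ ρ ι (f t k) (f t i) (b t i) / (Nt t:ℝ)^2) atTop (nhds 0) := by
      have hA : Tendsto (fun t =>
          (((δ*(‖f t i‖)^2-2)*ρ^2*(μ i) + 2*(μ i) + 2)*(1-ι^2)*δ*(μ k)
              *(‖f t k‖)^2
            + 2*(1-ι^2)*ρ^2*δ*(μ i)*(‖f t i‖)^2) / (Nt t:ℝ)^2) atTop (nhds 0) :=
        aux_div_zero' (Eventually.of_forall fun t => hE4 _ _ (hmem t k) (hmem t i)) hv2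
      have hcomb := (hA.add (hb2.const_mul ((1-ι^2)*ρ^2*(μ k)*(μ i)))).add
        (hRe.const_mul (2*δ*(1-ι^2)*ρ^2*(μ k)*(μ i)))
      simp only [add_zero, mul_zero] at hcomb
      refine Tendsto.congr' ?_ hcomb
      filter_upwards [hv.eventually_gt_atTop 0] with t ht
      have hne : ((Nt t:ℝ)) ≠ 0 := ne_of_gt ht
      simp only [zki4]
      field_simp
      ring
    have hz4 : Tendsto (fun t =>
        zki4 (μ k) (μ i) δ ρ ι (f t k) (f t i) (b t i) / (Nt t:ℝ)^2 * ((Mt t:ℝ))⁻¹) atTop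
        (nhds 0) := by simpa using hz4a.mul hu_inv
    have hbr := ((((hz1.const_mul (ι^2)).add hz2).add hz3).add hz4).const_mul
      (p i * τ^2 * (κ^2*β^2*(α k)*(α i)/((δ+1)^2*(μ k+1)*(μ i+1))))
    simp only [add_zero] at hbr
    refine Tendsto.congr' ?_ hbr
    filter_upwards [hu.eventually_gt_atTop 0, hv.eventually_gt_atTop 0] with t htu htv
    have hneu : ((Mt t:ℝ)) ≠ 0 := ne_of_gt htu
    have hnev : ((Nt t:ℝ)) ≠ 0 := ne_of_gt htv
    simp only [gammaKI]
    field_simp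
  have hSum := tendsto_finset_sum (Finset.univ.erase k) hterm
  -- varpi limit
  have hϖ : Tendsto (fun t => varpiK (Nt t) (α k) (μ k) β δ (f t k) / (Nt t:ℝ)) atTop
      (nhds (β*(α k)/((δ+1)*(μ k+1)) * (μ k+δ+1))) := by
    obtain ⟨E5, hE5⟩ := aux_bound' C hC.le (fun x _ =>
      (β*(α k)/((δ+1)*((μ k)+1))) * (δ*(μ k)*x^2)) (by fun_prop)
    have hA : Tendsto (fun t =>
        (β*(α k)/((δ+1)*((μ k)+1))) * (δ*(μ k)*(‖f t k‖)^2) / (Nt t:ℝ)) atTop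
        (nhds 0) :=
      aux_div_zero' (Eventually.of_forall fun t => hE5 _ _ (hmem t k) (hmem t k)) hv
    have hcomb := hA.add (tendsto_const_nhds (x := β*(α k)/((δ+1)*(μ k+1)) * (μ k+δ+1)))
    simp only [zero_add] at hcomb
    refine Tendsto.congr' ?_ hcomb
    filter_upwards [hv.eventually_gt_atTop 0] with t ht
    have hne : ((Nt t:ℝ)) ≠ 0 := ne_of_gt ht
    simp only [varpiK]
    field_simp
  -- zeta limit
  have hζ : Tendsto (fun t => zetaV K (Nt t) p α μ β δ ρ κ (f t) / (Nt t:ℝ)) atTop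
      (nhds (∑ s, (κ^2 * p s * β * α s / ((δ+1)*(μ s + 1))) *
        ((1-ρ^2)*δ*(μ s) + δ + μ s + 1))) := by
    have h1 : ∀ s ∈ (Finset.univ : Finset (Fin K)), Tendsto (fun t =>
        (κ^2 * p s * β * α s / ((δ+1)*(μ s + 1)))
          * (ρ^2*δ*(μ s)*(‖f t s‖)^2
             + ((1-ρ^2)*δ*(μ s) + δ + μ s + 1)*(Nt t:ℝ)) / (Nt t:ℝ)) atTop
        (nhds ((κ^2 * p s * β * α s / ((δ+1)*(μ s + 1))) *
          ((1-ρ^2)*δ*(μ s) + δ + μ s + 1))) := by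
      intro s _
      have hμs1ne : (μ s+1:ℝ) ≠ 0 := (by linarith [hμ s] : (0:ℝ) < μ s+1).ne'
      obtain ⟨E6, hE6⟩ := aux_bound' C hC.le (fun x _ =>
        (κ^2 * p s * β * α s / ((δ+1)*((μ s) + 1))) * (ρ^2*δ*(μ s)*x^2)) (by fun_prop)
      have hA : Tendsto (fun t =>
          (κ^2 * p s * β * α s / ((δ+1)*((μ s) + 1))) * (ρ^2*δ*(μ s)*(‖f t s‖)^2)
            / (Nt t:ℝ)) atTop (nhds 0) :=
        aux_div_zero' (Eventually.of_forall fun t => hE6 _ _ (hmem t s) (hmem t s)) hv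
      have hcomb := hA.add (tendsto_const_nhds
        (x := (κ^2 * p s * β * α s / ((δ+1)*(μ s + 1))) * ((1-ρ^2)*δ*(μ s) + δ + μ s + 1)))
      simp only [zero_add] at hcomb
      refine Tendsto.congr' ?_ hcomb
      filter_upwards [hv.eventually_gt_atTop 0] with t ht
      have hne : ((Nt t:ℝ)) ≠ 0 := ne_of_gt ht
      field_simp
    have := tendsto_finset_sum (Finset.univ : Finset (Fin K)) h1
    refine this.congr fun t => ?_
    simp only [zetaV, Finset.sum_div]
  -- full scaled denominator
  have hDen : Tendsto (fun t =>
      ((∑ i ∈ Finset.univ.erase k,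
          p i * τ^2 * gammaKI (Mt t) (Nt t) (α k) (α i) (μ k) (μ i) β δ ρ ι κ
            (f t k) (f t i) (b t i))
        + τ*(1-τ) * varpiK (Nt t) (α k) (μ k) β δ (f t k)
            * zetaV K (Nt t) p α μ β δ ρ κ (f t) * (Mt t:ℝ)
        + τ*(σRF2+σ2) * varpiK (Nt t) (α k) (μ k) β δ (f t k) * (Mt t:ℝ))
        / ((Mt t:ℝ)^2*(Nt t:ℝ)^2)) atTop
      (nhds (∑ i ∈ Finset.univ.erase k,
        p i * τ^2 * (κ^2*β^2*(α k)*(α i)/((δ+1)^2*(μ k+1)*(μ i+1))) *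
          (ι^2 * ((μ i+1-ρ^2*(μ i))*δ^2)))) := by
    have h2 : Tendsto (fun t =>
        τ*(1-τ) * (varpiK (Nt t) (α k) (μ k) β δ (f t k) / (Nt t:ℝ))
          * (zetaV K (Nt t) p α μ β δ ρ κ (f t) / (Nt t:ℝ)) * ((Mt t:ℝ))⁻¹) atTop
        (nhds 0) := by
      simpa using ((hϖ.const_mul (τ*(1-τ))).mul hζ).mul hu_inv
    have h3 : Tendsto (fun t =>
        τ*(σRF2+σ2) * (varpiK (Nt t) (α k) (μ k) β δ (f t k) / (Nt t:ℝ))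
          * (((Mt t:ℝ))*(Nt t:ℝ))⁻¹) atTop (nhds 0) := by
      have huv_inv : Tendsto (fun t => ((Mt t:ℝ)*(Nt t:ℝ))⁻¹) atTop (nhds 0) :=
        tendsto_inv_atTop_zero.comp huv
      simpa using (hϖ.const_mul (τ*(σRF2+σ2))).mul huv_inv
    have hcomb := (hSum.add h2).add h3
    simp only [add_zero] at hcomb
    refine Tendsto.congr' ?_ hcomb
    filter_upwards [hu.eventually_gt_atTop 0, hv.eventually_gt_atTop 0] with t htu htv
    have hneu : ((Mt t:ℝ)) ≠ 0 := ne_of_gt htu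
    have hnev : ((Nt t:ℝ)) ≠ 0 := ne_of_gt htv
    rw [add_div, add_div, Finset.sum_div]
    congr 1
    · congr 1
      field_simp
    · field_simp
  -- denominator limit is positive
  have hne_erase : (Finset.univ.erase k).Nonempty := by
    rw [← Finset.card_pos, Finset.card_erase_of_mem (Finset.mem_univ k), Finset.card_univ,
      Fintype.card_fin]
    omega
  have hDApos : 0 < ∑ i ∈ Finset.univ.erase k,
      p i * τ^2 * (κ^2*β^2*(α k)*(α i)/((δ+1)^2*(μ k+1)*(μ i+1))) *
        (ι^2 * ((μ i+1-ρ^2*(μ i))*δ^2)) := by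
    refine Finset.sum_pos (fun i _ => ?_) hne_erase
    have h1 := hp i
    have h2 := hα i
    have h3 := hα k
    have h4 : (0:ℝ) < μ i+1-ρ^2*(μ i) := by nlinarith [hμ i]
    have h5 : (0:ℝ) < μ i + 1 := by linarith [hμ i]
    positivity
  -- the SINR limit
  have hS : Tendsto (fun t =>
      p k * τ^2 * xiK (Mt t) (Nt t) (α k) (μ k) β δ ρ ι κ (f t k) /
        ((∑ i ∈ Finset.univ.erase k,
            p i * τ^2 * gammaKI (Mt t) (Nt t) (α k) (α i) (μ k) (μ i) β δ ρ ι κ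
              (f t k) (f t i) (b t i))
          + τ*(1-τ) * varpiK (Nt t) (α k) (μ k) β δ (f t k)
              * zetaV K (Nt t) p α μ β δ ρ κ (f t) * (Mt t:ℝ)
          + τ*(σRF2+σ2) * varpiK (Nt t) (α k) (μ k) β δ (f t k) * (Mt t:ℝ))) atTop
      (nhds ((p k * τ^2 * (β^2*(α k)^2*κ^2/((δ+1)^2*(μ k+1)^2)) *
        (ι^2 * (ρ^2*(μ k+δ+1)^2 + (1-ρ^2)*δ^2*(μ k) + δ^2))) /
        (∑ i ∈ Finset.univ.erase k,
          p i * τ^2 * (κ^2*β^2*(α k)*(α i)/((δ+1)^2*(μ k+1)*(μ i+1))) *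
            (ι^2 * ((μ i+1-ρ^2*(μ i))*δ^2))))) := by
    refine Tendsto.congr' ?_ (hNum.div hDen (ne_of_gt hDApos))
    filter_upwards [hu.eventually_gt_atTop 0, hv.eventually_gt_atTop 0] with t htu htv
    exact div_div_div_same' (ne_of_gt (mul_pos (pow_pos htu 2) (pow_pos htv 2)))
  -- identify the limit value
  have hLnum : (0:ℝ) < (ρ^2/δ^2)*(μ k+δ+1)^2 + μ k + 1 - ρ^2*μ k := by
    have h7 : (0:ℝ) < μ k+δ+1 := by linarith [hμ k]
    have h6 : (0:ℝ) < (ρ^2/δ^2)*(μ k+δ+1)^2 := by positivity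
    nlinarith [hμ k]
  have hSden : (0:ℝ) < ∑ i ∈ Finset.univ.erase k,
      (p i * α i * (μ k+1)/(p k * α k * (μ i+1))) * (μ i + 1 - ρ^2 * μ i) := by
    refine Finset.sum_pos (fun i _ => ?_) hne_erase
    have h1 := hp i
    have h2 := hα i
    have h3 := hα k
    have h0 := hp k
    have h4 : (0:ℝ) < μ i + 1 - ρ^2*(μ i) := by nlinarith [hμ i]
    have h5 : (0:ℝ) < μ i + 1 := by linarith [hμ i]
    positivity
  have hcpos : (0:ℝ) < p k * τ^2*κ^2*β^2*(α k)^2*ι^2*δ^2/((δ+1)^2*(μ k+1)^2) := by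
    have h0 := hp k
    have h3 := hα k
    positivity
  have hval : (p k * τ^2 * (β^2*(α k)^2*κ^2/((δ+1)^2*(μ k+1)^2)) *
        (ι^2 * (ρ^2*(μ k+δ+1)^2 + (1-ρ^2)*δ^2*(μ k) + δ^2))) /
        (∑ i ∈ Finset.univ.erase k,
          p i * τ^2 * (κ^2*β^2*(α k)*(α i)/((δ+1)^2*(μ k+1)*(μ i+1))) *
            (ι^2 * ((μ i+1-ρ^2*(μ i))*δ^2)))
      = ((ρ^2/δ^2)*(μ k+δ+1)^2 + μ k + 1 - ρ^2*μ k) /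
        (∑ i ∈ Finset.univ.erase k,
          (p i * α i * (μ k+1)/(p k * α k * (μ i+1))) * (μ i + 1 - ρ^2 * μ i)) := by
    have hN : (p k * τ^2 * (β^2*(α k)^2*κ^2/((δ+1)^2*(μ k+1)^2)) *
        (ι^2 * (ρ^2*(μ k+δ+1)^2 + (1-ρ^2)*δ^2*(μ k) + δ^2)))
        = (p k * τ^2*κ^2*β^2*(α k)^2*ι^2*δ^2/((δ+1)^2*(μ k+1)^2)) *
          ((ρ^2/δ^2)*(μ k+δ+1)^2 + μ k + 1 - ρ^2*μ k) := by
      field_simp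
      ring
    have hD : (∑ i ∈ Finset.univ.erase k,
        p i * τ^2 * (κ^2*β^2*(α k)*(α i)/((δ+1)^2*(μ k+1)*(μ i+1))) *
          (ι^2 * ((μ i+1-ρ^2*(μ i))*δ^2)))
        = (p k * τ^2*κ^2*β^2*(α k)^2*ι^2*δ^2/((δ+1)^2*(μ k+1)^2)) *
          (∑ i ∈ Finset.univ.erase k,
            (p i * α i * (μ k+1)/(p k * α k * (μ i+1))) * (μ i + 1 - ρ^2 * μ i)) := by
      rw [Finset.mul_sum]
      refine Finset.sum_congr rfl fun i _ => ?_
      have h5 : (μ i + 1) ≠ 0 := by have := hμ i; positivity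
      have h0 : p k ≠ 0 := ne_of_gt (hp k)
      have h3 : α k ≠ 0 := ne_of_gt (hα k)
      field_simp
    rw [hN, hD, mul_div_mul_left _ _ (ne_of_gt hcpos)]
  rw [hval] at hS
  have h1L : (0:ℝ) < 1 + ((ρ^2/δ^2)*(μ k+δ+1)^2 + μ k + 1 - ρ^2*μ k) /
      (∑ i ∈ Finset.univ.erase k,
        (p i * α i * (μ k+1)/(p k * α k * (μ i+1))) * (μ i + 1 - ρ^2 * μ i)) := by
    have := div_pos hLnum hSden
    linarith
  have hcont : ContinuousAt (Real.logb 2) (1 + ((ρ^2/δ^2)*(μ k+δ+1)^2 + μ k + 1 - ρ^2*μ k) /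
      (∑ i ∈ Finset.univ.erase k,
        (p i * α i * (μ k+1)/(p k * α k * (μ i+1))) * (μ i + 1 - ρ^2 * μ i))) :=
    Real.continuousAt_logb (ne_of_gt h1L)
  exact hcont.tendsto.comp (tendsto_const_nhds.add hS)


end
end

section
/- (Power scaling law in M.) Fix N, the complex data f_1,…,f_K and b_{ki}, and all real parameters except the powers, and for ε ≥ 0 and fixed E_u > 0 set p_i = E_u/M^ε for every i. Define Γ_k = τ²ι²κ²β²α_k²·c_{k,1}/((δ+1)²(μ_k+1)²) and, for i ≠ k, Γ_ki = τ²ι²κ²β²α_kα_i·z_{ki,1}/((δ+1)²(μ_k+1)(μ_i+1)). Then as M → ∞: (i) if ε > 1, R̃_k → 0; (ii) if ε = 1, R̃_k → log₂(1 + E_uΓ_k/(Σ_{i≠k} E_uΓ_ki + (σ_RF²+σ²)τϖ_k)); (iii) if 0 ≤ ε < 1 and Σ_{i≠k} Γ_ki > 0, then R̃_k → log₂(1 + Γ_k/Σ_{i≠k} Γ_ki). -/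
open MeasureTheory ProbabilityTheory Filter Finset

noncomputable section
lemma zki1_nonneg {N : ℕ} {μk μi δ ρ : ℝ} (hμk : 0 < μk) (hμi : 0 < μi)
    (hδ : 0 < δ) (hρ0 : 0 ≤ ρ) (hρ1 : ρ ≤ 1) (fk fi bki : ℂ) :
    0 ≤ zki1 N μk μi δ ρ fk fi bki := by
  have hn : (0:ℝ) ≤ (N:ℝ) := Nat.cast_nonneg N
  set a := ‖fk‖ with ha0
  set ai := ‖fi‖ with hai0
  set bb := ‖bki‖ with hbb0
  set r := ((starRingEnd ℂ) fk * fi * (starRingEnd ℂ) bki).re with hr0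
  have ha : 0 ≤ a := norm_nonneg _
  have hai : 0 ≤ ai := norm_nonneg _
  have hbb : 0 ≤ bb := norm_nonneg _
  have hrabs : |r| ≤ a * ai * bb := by
    calc |r| ≤ ‖(starRingEnd ℂ) fk * fi * (starRingEnd ℂ) bki‖ :=
          Complex.abs_re_le_norm _
      _ = a * ai * bb := by
          rw [norm_mul, norm_mul, Complex.norm_conj, Complex.norm_conj]
  have hr' : -(a*ai*bb) ≤ r := neg_le_of_abs_le hrabs
  have hρ2 : ρ^2 ≤ 1 := by nlinarith
  have hq : 0 ≤ bb^2 + 2*δ*r + δ^2*a^2*ai^2 := by nlinarith [sq_nonneg (bb - δ*a*ai)]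
  have h0 : 0 ≤ μi + 1 - ρ^2*μi := by nlinarith
  have h1 : 0 ≤ (μi+1-ρ^2*μi)*δ^2*(N:ℝ)^2 :=
    mul_nonneg (mul_nonneg h0 (sq_nonneg δ)) (sq_nonneg _)
  have h2 : 0 ≤ ((μi+1-ρ^2*μi)*δ^2*μk*a^2 + ρ^2*δ^2*μi*ai^2
      + (μk+2*δ+1)*(μi+1-ρ^2*μi) + ρ^2*μi)*(N:ℝ) := by
    apply mul_nonneg _ hn
    have := mul_nonneg (mul_nonneg (mul_nonneg h0 (sq_nonneg δ)) hμk.le) (sq_nonneg a)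
    have := mul_nonneg (mul_nonneg (mul_nonneg (sq_nonneg ρ) (sq_nonneg δ)) hμi.le) (sq_nonneg ai)
    have := mul_nonneg (by nlinarith : (0:ℝ) ≤ μk+2*δ+1) h0
    have := mul_nonneg (sq_nonneg ρ) hμi.le
    linarith
  have h3 : 0 ≤ 2*δ*ai^2*ρ^2*μi := by
    have := mul_nonneg (mul_nonneg (mul_nonneg (by linarith : (0:ℝ) ≤ 2*δ) (sq_nonneg ai)) (sq_nonneg ρ)) hμi.le
    linarith
  have h4 : 0 ≤ (2*μi*(1-ρ^2)+2)*δ*μk*a^2 := by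
    have hh : (0:ℝ) ≤ 2*μi*(1-ρ^2)+2 := by nlinarith
    exact mul_nonneg (mul_nonneg (mul_nonneg hh hδ.le) hμk.le) (sq_nonneg a)
  have h5 : 0 ≤ ρ^2*μi*μk*(bb^2 + 2*δ*r + δ^2*a^2*ai^2) :=
    mul_nonneg (mul_nonneg (mul_nonneg (sq_nonneg ρ) hμi.le) hμk.le) hq
  have hkey : zki1 N μk μi δ ρ fk fi bki =
      ((μi+1-ρ^2*μi)*δ^2*(N:ℝ)^2
      + ((μi+1-ρ^2*μi)*δ^2*μk*a^2 + ρ^2*δ^2*μi*ai^2 + (μk+2*δ+1)*(μi+1-ρ^2*μi) + ρ^2*μi)*(N:ℝ)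
      + 2*δ*ai^2*ρ^2*μi + (2*μi*(1-ρ^2)+2)*δ*μk*a^2)
      + ρ^2*μi*μk*(bb^2 + 2*δ*r + δ^2*a^2*ai^2) := by
    rw [zki1]; ring
  rw [hkey]
  linarith

lemma ck1_nonneg {N : ℕ} (hN : 0 < N) {μk δ ρ : ℝ} (hμk : 0 < μk)
    (hδ : 0 < δ) (hρ0 : 0 ≤ ρ) (hρ1 : ρ ≤ 1) (fk : ℂ) :
    0 ≤ ck1 N μk δ ρ fk := by
  have hn : (1:ℝ) ≤ (N:ℝ) := by exact_mod_cast hN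
  set a := ‖fk‖ with ha0
  have ha : 0 ≤ a := norm_nonneg _
  have hρ2 : ρ^2 ≤ 1 := by nlinarith
  have h1 : 0 ≤ ρ^2*(μk+δ+1)^2*((N:ℝ)^2-(N:ℝ)) := by
    apply mul_nonneg (mul_nonneg (sq_nonneg ρ) (sq_nonneg _))
    nlinarith
  have h2 : 0 ≤ (1-ρ^2)*δ^2*μk*(N:ℝ)^2 :=
    mul_nonneg (mul_nonneg (mul_nonneg (by linarith) (sq_nonneg δ)) hμk.le) (sq_nonneg _)
  have h3 : 0 ≤ δ^2*(N:ℝ)^2 := mul_nonneg (sq_nonneg δ) (sq_nonneg _)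
  have h4 : 0 ≤ ((2*μk+3*δ+2)*ρ^2 + δ + δ*μk*(1-ρ^2))*δ*μk*a^2*(N:ℝ) := by
    have hh : (0:ℝ) ≤ (2*μk+3*δ+2)*ρ^2 + δ + δ*μk*(1-ρ^2) := by
      have := mul_nonneg (by nlinarith : (0:ℝ) ≤ 2*μk+3*δ+2) (sq_nonneg ρ)
      have := mul_nonneg (mul_nonneg hδ.le hμk.le) (by linarith : (0:ℝ) ≤ 1-ρ^2)
      linarith
    exact mul_nonneg (mul_nonneg (mul_nonneg (mul_nonneg hh hδ.le) hμk.le) (sq_nonneg a)) (by linarith)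
  have h5 : 0 ≤ ((μk+δ+2)^2 - 2*ρ^2*δ*μk - 2)*(N:ℝ) := by
    apply mul_nonneg _ (by linarith)
    have hh : ρ^2*δ*μk ≤ δ*μk := by
      nlinarith [mul_nonneg (mul_nonneg (by linarith : (0:ℝ) ≤ 1-ρ^2) hδ.le) hμk.le]
    nlinarith [hh, sq_nonneg μk, sq_nonneg δ]
  have h6 : 0 ≤ ρ^2*δ^2*μk^2*a^4 := by positivity
  have h7 : 0 ≤ 2*((1-ρ^2)*(μk+δ)+2)*δ*μk*a^2 := by
    have hh : (0:ℝ) ≤ (1-ρ^2)*(μk+δ)+2 := by nlinarith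
    have := mul_nonneg (mul_nonneg (mul_nonneg hh hδ.le) hμk.le) (sq_nonneg a)
    linarith
  have hkey : ck1 N μk δ ρ fk =
      ρ^2*(μk+δ+1)^2*((N:ℝ)^2-(N:ℝ)) + (1-ρ^2)*δ^2*μk*(N:ℝ)^2 + δ^2*(N:ℝ)^2
      + ((2*μk+3*δ+2)*ρ^2 + δ + δ*μk*(1-ρ^2))*δ*μk*a^2*(N:ℝ)
      + ((μk+δ+2)^2 - 2*ρ^2*δ*μk - 2)*(N:ℝ)
      + ρ^2*δ^2*μk^2*a^4 + 2*((1-ρ^2)*(μk+δ)+2)*δ*μk*a^2 := by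
    rw [ck1]; ring
  rw [hkey]
  linarith
lemma term_div_id (Eu τ X A d M n c1 c2 c3 c4 ι : ℝ) (hX : X ≠ 0) (hM : M ≠ 0) (hd : d ≠ 0) :
    Eu/X * τ^2 * (A*M/d * (c1*ι^2*M + c2*n^2 + c3*n + c4))
      = Eu*τ^2*(A/d)*(c1*ι^2 + (c2*n^2 + c3*n + c4)/M) * (M^2/X) := by
  field_simp
  ring

lemma term_div_id' (Eu τ X A d M n c1 c2 c3 c4 ι : ℝ) (hX : X ≠ 0) (hM : M ≠ 0) (hd : d ≠ 0) :
    Eu/X * τ^2 * (A*M/d * (c1*ι^2*M + c2*n^2 + c3*n + c4))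
      = Eu*τ^2*(A/d*(c1*ι^2 + (c2*n^2 + c3*n + c4)/M)) * (M^2/X) := by
  field_simp
  ring
set_option maxHeartbeats 1000000 in
/-- power scaling law in `M`, eq. (26): with `p_i = E_u/M^ε` the
closed-form rate converges as `M → ∞`, with limit depending on the scaling factor `ε`. -/
theorem power_scaling_law_in_M
    (K : ℕ) (hK : 2 ≤ K) (k : Fin K)
    (α μ : Fin K → ℝ) (β δ ρ ι κ τ σ2 σRF2 : ℝ)
    (hα : ∀ i, 0 < α i) (hμ : ∀ i, 0 < μ i)
    (hβ : 0 < β) (hδ : 0 < δ)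
    (hρ : ρ ∈ Set.Ioo (0:ℝ) 1) (hι : ι ∈ Set.Ioc (0:ℝ) 1) (hκ : κ ∈ Set.Ioc (0:ℝ) 1)
    (hτ : τ ∈ Set.Ioo (0:ℝ) 1) (hσ : 0 < σ2) (hσRF : 0 < σRF2)
    (N : ℕ) (hN : 0 < N)
    (f b : Fin K → ℂ)
    (hf_adm : ∀ i, ‖f i‖ ≤ N)
    (hb_adm : ∀ i, i ≠ k → ‖b i‖ ≤ N)
    (Eu e : ℝ) (hEu : 0 < Eu) (he : 0 ≤ e) :
    (e > 1 →
      Tendsto (fun M : ℕ =>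
          Rtilde K k M N (fun _ => Eu/(M:ℝ)^e) α μ β δ ρ ι κ τ σ2 σRF2 f b)
        atTop (nhds 0)) ∧
    (e = 1 →
      Tendsto (fun M : ℕ =>
          Rtilde K k M N (fun _ => Eu/(M:ℝ)^e) α μ β δ ρ ι κ τ σ2 σRF2 f b)
        atTop (nhds (Real.logb 2 (1 +
          Eu * GammaK N (α k) (μ k) β δ ρ ι κ τ (f k) /
          ((∑ i ∈ Finset.univ.erase k,
              Eu * GammaKI N (α k) (α i) (μ k) (μ i) β δ ρ ι κ τ (f k) (f i) (b i))
           + (σRF2+σ2) * τ * varpiK N (α k) (μ k) β δ (f k)))))) ∧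
    (e < 1 →
      0 < (∑ i ∈ Finset.univ.erase k,
            GammaKI N (α k) (α i) (μ k) (μ i) β δ ρ ι κ τ (f k) (f i) (b i)) →
      Tendsto (fun M : ℕ =>
          Rtilde K k M N (fun _ => Eu/(M:ℝ)^e) α μ β δ ρ ι κ τ σ2 σRF2 f b)
        atTop (nhds (Real.logb 2 (1 +
          GammaK N (α k) (μ k) β δ ρ ι κ τ (f k) /
          (∑ i ∈ Finset.univ.erase k,
            GammaKI N (α k) (α i) (μ k) (μ i) β δ ρ ι κ τ (f k) (f i) (b i)))))) := by
  obtain ⟨hρ0, hρ1⟩ := hρ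
  obtain ⟨hι0, hι1⟩ := hι
  obtain ⟨hκ0, hκ1⟩ := hκ
  obtain ⟨hτ0, hτ1⟩ := hτ
  have hδ1 : (0:ℝ) < δ + 1 := by linarith
  have hδ1' : (δ+1 : ℝ) ≠ 0 := ne_of_gt hδ1
  have hμ1 : ∀ i, (0:ℝ) < μ i + 1 := fun i => by linarith [hμ i]
  have hμ1' : ∀ i, (μ i + 1 : ℝ) ≠ 0 := fun i => ne_of_gt (hμ1 i)
  have hN1 : (1:ℝ) ≤ (N:ℝ) := by exact_mod_cast hN
  set c1 : ℝ := ck1 N (μ k) δ ρ (f k) with hc1def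
  set P : ℝ := ck2 (μ k) δ ρ ι * (N:ℝ)^2 + ck3 (μ k) δ ρ ι (f k) * (N:ℝ)
      + ck4 (μ k) δ ρ ι (f k) with hPdef
  set C1 : ℝ := β^2*(α k)^2*κ^2/((δ+1)^2*(μ k+1)^2) with hC1def
  set D : Fin K → ℝ := fun i => κ^2*β^2*(α k)*(α i)/((δ+1)^2*(μ k+1)*(μ i+1)) with hDdef
  set z1 : Fin K → ℝ := fun i => zki1 N (μ k) (μ i) δ ρ (f k) (f i) (b i) with hz1def
  set Q : Fin K → ℝ := fun i => zki2 (μ k) (μ i) δ ρ ι * (N:ℝ)^2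
      + zki3 (μ k) (μ i) δ ρ ι (f k) (f i) * (N:ℝ)
      + zki4 (μ k) (μ i) δ ρ ι (f k) (f i) (b i) with hQdef
  set W : ℝ := varpiK N (α k) (μ k) β δ (f k) with hWdef
  set Z0 : ℝ := ∑ s, (κ^2 * β * α s / ((δ+1)*(μ s + 1)))
      * (ρ^2*δ*(μ s)*(‖f s‖)^2
         + ((1-ρ^2)*δ*(μ s) + δ + μ s + 1)*(N:ℝ)) with hZ0def
  set num : ℕ → ℝ := fun M => Eu*τ^2*C1*(c1*ι^2 + P/(M:ℝ)) with hnumdef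
  set den : ℕ → ℝ := fun M =>
      Eu*τ^2*(∑ i ∈ Finset.univ.erase k, D i*(z1 i*ι^2 + Q i/(M:ℝ)))
      + τ*(1-τ)*W*Z0*Eu/(M:ℝ) + τ*(σRF2+σ2)*W*(M:ℝ)^(e-1) with hdendef
  -- positivity facts
  have hW0 : 0 < W := by
    rw [hWdef, varpiK]
    apply mul_pos (div_pos (mul_pos hβ (hα k)) (mul_pos hδ1 (hμ1 k)))
    have h1 : 0 ≤ δ*(μ k)*(‖f k‖)^2 :=
      mul_nonneg (mul_nonneg hδ.le (hμ k).le) (sq_nonneg _)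
    have h2 : (0:ℝ) < (μ k+δ+1)*(N:ℝ) :=
      mul_pos (by linarith [hμ k]) (by linarith)
    linarith
  have hz1nn : ∀ i, 0 ≤ z1 i := fun i =>
    zki1_nonneg (hμ k) (hμ i) hδ hρ0.le hρ1.le (f k) (f i) (b i)
  have hDpos : ∀ i, 0 < D i := fun i => by
    rw [hDdef]
    exact div_pos (mul_pos (mul_pos (mul_pos (pow_pos hκ0 2) (pow_pos hβ 2)) (hα k)) (hα i))
      (mul_pos (mul_pos (pow_pos hδ1 2) (hμ1 k)) (hμ1 i))
  have hc1nn : 0 ≤ c1 := ck1_nonneg hN (hμ k) hδ hρ0.le hρ1.le (f k)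
  have hC1nn : 0 ≤ C1 := by rw [hC1def]; positivity
  have hSnn : 0 ≤ ∑ i ∈ Finset.univ.erase k, D i*(z1 i*ι^2) :=
    Finset.sum_nonneg fun i _ => mul_nonneg (hDpos i).le (mul_nonneg (hz1nn i) (sq_nonneg ι))
  -- the key algebraic identity
  have hkey : ∀ M : ℕ, 1 ≤ M →
      Rtilde K k M N (fun _ => Eu/(M:ℝ)^e) α μ β δ ρ ι κ τ σ2 σRF2 f b
        = Real.logb 2 (1 + num M / den M) := by
    intro M hM
    have hM0 : (0:ℝ) < (M:ℝ) := by exact_mod_cast hM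
    have hM0' : ((M:ℝ)) ≠ 0 := ne_of_gt hM0
    have hMe : (0:ℝ) < (M:ℝ)^e := Real.rpow_pos_of_pos hM0 e
    have hMe' : ((M:ℝ)^e) ≠ 0 := ne_of_gt hMe
    have hg : (M:ℝ)^2/(M:ℝ)^e ≠ 0 := ne_of_gt (div_pos (by positivity) hMe)
    have hre : (M:ℝ)^(e-1) = (M:ℝ)^e/(M:ℝ) := by
      rw [Real.rpow_sub hM0, Real.rpow_one]
    have hzeta : zetaV K N (fun _ => Eu/(M:ℝ)^e) α μ β δ ρ κ f = Eu/(M:ℝ)^e * Z0 := by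
      rw [hZ0def, zetaV, Finset.mul_sum]
      exact Finset.sum_congr rfl fun s _ => by ring
    have hA : Eu/(M:ℝ)^e * τ^2 * xiK M N (α k) (μ k) β δ ρ ι κ (f k)
        = num M * ((M:ℝ)^2/(M:ℝ)^e) := by
      simp only [hnumdef, hC1def, hPdef, hc1def, xiK]
      have hd : ((δ+1)^2*(μ k+1)^2 : ℝ) ≠ 0 := by
        exact ne_of_gt (mul_pos (pow_pos hδ1 2) (pow_pos (hμ1 k) 2))
      exact term_div_id Eu τ ((M:ℝ)^e) (β^2*(α k)^2*κ^2) ((δ+1)^2*(μ k+1)^2) (M:ℝ) (N:ℝ)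
        (ck1 N (μ k) δ ρ (f k)) (ck2 (μ k) δ ρ ι) (ck3 (μ k) δ ρ ι (f k))
        (ck4 (μ k) δ ρ ι (f k)) ι hMe' hM0' hd
    have hsum : (∑ i ∈ Finset.univ.erase k, Eu/(M:ℝ)^e * τ^2
          * gammaKI M N (α k) (α i) (μ k) (μ i) β δ ρ ι κ (f k) (f i) (b i))
        = (Eu*τ^2*(∑ i ∈ Finset.univ.erase k, D i*(z1 i*ι^2 + Q i/(M:ℝ))))
          * ((M:ℝ)^2/(M:ℝ)^e) := by
      rw [Finset.mul_sum, Finset.sum_mul]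
      refine Finset.sum_congr rfl fun i _ => ?_
      simp only [hDdef, hz1def, hQdef, gammaKI]
      have hd : ((δ+1)^2*(μ k+1)*(μ i+1) : ℝ) ≠ 0 := by
        exact ne_of_gt (mul_pos (mul_pos (pow_pos hδ1 2) (hμ1 k)) (hμ1 i))
      exact term_div_id' Eu τ ((M:ℝ)^e) (κ^2*β^2*(α k)*(α i)) ((δ+1)^2*(μ k+1)*(μ i+1)) (M:ℝ) (N:ℝ)
        (zki1 N (μ k) (μ i) δ ρ (f k) (f i) (b i)) (zki2 (μ k) (μ i) δ ρ ι)
        (zki3 (μ k) (μ i) δ ρ ι (f k) (f i)) (zki4 (μ k) (μ i) δ ρ ι (f k) (f i) (b i)) ι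
        hMe' hM0' hd
    have hB : (∑ i ∈ Finset.univ.erase k, Eu/(M:ℝ)^e * τ^2
          * gammaKI M N (α k) (α i) (μ k) (μ i) β δ ρ ι κ (f k) (f i) (b i))
        + τ*(1-τ) * W * zetaV K N (fun _ => Eu/(M:ℝ)^e) α μ β δ ρ κ f * (M:ℝ)
        + τ*(σRF2+σ2) * W * (M:ℝ)
        = den M * ((M:ℝ)^2/(M:ℝ)^e) := by
      rw [hzeta, hdendef]
      simp only []
      rw [add_mul, add_mul, hsum]
      congr 1
      · congr 1
        field_simp
      · rw [hre]
        field_simp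
    simp only [Rtilde]
    rw [hA, hB, mul_div_mul_right _ _ hg]
  -- limits of the pieces
  have hDiv0 : ∀ C : ℝ, Tendsto (fun M : ℕ => C/(M:ℝ)) atTop (nhds 0) :=
    fun C => tendsto_const_div_atTop_nhds_zero_nat C
  have hnumlim : Tendsto num atTop (nhds (Eu*τ^2*C1*(c1*ι^2))) := by
    have h := ((hDiv0 P).const_add (c1*ι^2)).const_mul (Eu*τ^2*C1)
    rw [add_zero] at h
    exact h
  have hsumlim : Tendsto
      (fun M : ℕ => Eu*τ^2*(∑ i ∈ Finset.univ.erase k, D i*(z1 i*ι^2 + Q i/(M:ℝ))))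
      atTop (nhds (Eu*τ^2*(∑ i ∈ Finset.univ.erase k, D i*(z1 i*ι^2)))) := by
    refine Tendsto.const_mul _ (tendsto_finset_sum _ fun i _ => ?_)
    have h := ((hDiv0 (Q i)).const_add (z1 i*ι^2)).const_mul (D i)
    rw [add_zero] at h
    exact h
  have hZlim : Tendsto (fun M : ℕ => τ*(1-τ)*W*Z0*Eu/(M:ℝ)) atTop (nhds 0) := hDiv0 _
  refine ⟨?_, ?_, ?_⟩
  · -- case e > 1
    intro he1
    have ht : Tendsto (fun M : ℕ => τ*(σRF2+σ2)*W*(M:ℝ)^(e-1)) atTop atTop := by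
      refine Tendsto.const_mul_atTop (by positivity) ?_
      exact (tendsto_rpow_atTop (by linarith)).comp tendsto_natCast_atTop_atTop
    have hdenlim : Tendsto den atTop atTop := (hsumlim.add hZlim).add_atTop ht
    have hr : Tendsto (fun M : ℕ => num M / den M) atTop (nhds 0) :=
      hnumlim.div_atTop hdenlim
    have hfin : Tendsto (fun M : ℕ => Real.logb 2 (1 + num M / den M)) atTop (nhds 0) := by
      have hcont : ContinuousAt (Real.logb 2) 1 := Real.continuousAt_logb one_ne_zero
      have h2 : Tendsto (fun M : ℕ => 1 + num M / den M) atTop (nhds 1) := by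
        have := (tendsto_const_nhds (x := (1:ℝ)) (f := atTop (α := ℕ))).add hr
        rwa [add_zero] at this
      have := hcont.tendsto.comp h2
      simpa [Function.comp_def, Real.logb_one] using this
    refine Tendsto.congr' ?_ hfin
    filter_upwards [eventually_ge_atTop 1] with M hM
    exact (hkey M hM).symm
  · -- case e = 1
    intro he1
    subst he1
    have htlim : Tendsto (fun M : ℕ => τ*(σRF2+σ2)*W*(M:ℝ)^((1:ℝ)-1)) atTop
        (nhds (τ*(σRF2+σ2)*W)) := by
      have : ∀ M : ℕ, τ*(σRF2+σ2)*W*(M:ℝ)^((1:ℝ)-1) = τ*(σRF2+σ2)*W := by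
        intro M
        norm_num
      simp only [this]
      exact tendsto_const_nhds
    have hdenlim : Tendsto den atTop
        (nhds (Eu*τ^2*(∑ i ∈ Finset.univ.erase k, D i*(z1 i*ι^2)) + 0 + τ*(σRF2+σ2)*W)) :=
      (hsumlim.add hZlim).add htlim
    have hDpos' : (0:ℝ) <
        Eu*τ^2*(∑ i ∈ Finset.univ.erase k, D i*(z1 i*ι^2)) + 0 + τ*(σRF2+σ2)*W := by
      have h1 : 0 ≤ Eu*τ^2*(∑ i ∈ Finset.univ.erase k, D i*(z1 i*ι^2)) :=
        mul_nonneg (mul_nonneg hEu.le (sq_nonneg τ)) hSnn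
      have h2 : 0 < τ*(σRF2+σ2)*W := mul_pos (mul_pos hτ0 (by linarith)) hW0
      linarith
    have hr : Tendsto (fun M : ℕ => num M / den M) atTop
        (nhds ((Eu*τ^2*C1*(c1*ι^2)) /
          (Eu*τ^2*(∑ i ∈ Finset.univ.erase k, D i*(z1 i*ι^2)) + 0 + τ*(σRF2+σ2)*W))) :=
      hnumlim.div hdenlim (ne_of_gt hDpos')
    have hLnn : 0 ≤ (Eu*τ^2*C1*(c1*ι^2)) /
        (Eu*τ^2*(∑ i ∈ Finset.univ.erase k, D i*(z1 i*ι^2)) + 0 + τ*(σRF2+σ2)*W) := by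
      apply div_nonneg _ hDpos'.le
      exact mul_nonneg (mul_nonneg (mul_nonneg hEu.le (sq_nonneg τ)) hC1nn)
        (mul_nonneg hc1nn (sq_nonneg ι))
    have hfin : Tendsto (fun M : ℕ => Real.logb 2 (1 + num M / den M)) atTop
        (nhds (Real.logb 2 (1 + (Eu*τ^2*C1*(c1*ι^2)) /
          (Eu*τ^2*(∑ i ∈ Finset.univ.erase k, D i*(z1 i*ι^2)) + 0 + τ*(σRF2+σ2)*W)))) := by
      have hcont : ContinuousAt (Real.logb 2) _ :=
        Real.continuousAt_logb (by linarith : (1:ℝ) + _ ≠ 0)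
      exact hcont.tendsto.comp (tendsto_const_nhds.add hr)
    have heq : Real.logb 2 (1 + (Eu*τ^2*C1*(c1*ι^2)) /
          (Eu*τ^2*(∑ i ∈ Finset.univ.erase k, D i*(z1 i*ι^2)) + 0 + τ*(σRF2+σ2)*W))
        = Real.logb 2 (1 +
          Eu * GammaK N (α k) (μ k) β δ ρ ι κ τ (f k) /
          ((∑ i ∈ Finset.univ.erase k,
              Eu * GammaKI N (α k) (α i) (μ k) (μ i) β δ ρ ι κ τ (f k) (f i) (b i))
           + (σRF2+σ2) * τ * W)) := by
      have e1 : Eu*τ^2*C1*(c1*ι^2) = Eu * GammaK N (α k) (μ k) β δ ρ ι κ τ (f k) := by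
        simp only [hC1def, hc1def, GammaK]; ring
      have e2 : Eu*τ^2*(∑ i ∈ Finset.univ.erase k, D i*(z1 i*ι^2)) + 0 + τ*(σRF2+σ2)*W
          = (∑ i ∈ Finset.univ.erase k,
              Eu * GammaKI N (α k) (α i) (μ k) (μ i) β δ ρ ι κ τ (f k) (f i) (b i))
            + (σRF2+σ2) * τ * W := by
        rw [add_zero]
        congr 1
        · rw [Finset.mul_sum]
          refine Finset.sum_congr rfl fun i _ => ?_
          simp only [hDdef, hz1def, GammaKI]; ring
        · ring
      rw [e1, e2]
    rw [heq] at hfin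
    refine Tendsto.congr' ?_ hfin
    filter_upwards [eventually_ge_atTop 1] with M hM
    exact (hkey M hM).symm
  · -- case e < 1
    intro he1 hpos
    have hsum_eq : Eu*τ^2*(∑ i ∈ Finset.univ.erase k, D i*(z1 i*ι^2))
        = Eu * ∑ i ∈ Finset.univ.erase k,
            GammaKI N (α k) (α i) (μ k) (μ i) β δ ρ ι κ τ (f k) (f i) (b i) := by
      rw [Finset.mul_sum, Finset.mul_sum]
      refine Finset.sum_congr rfl fun i _ => ?_
      simp only [hDdef, hz1def, GammaKI]; ring
    have htlim : Tendsto (fun M : ℕ => τ*(σRF2+σ2)*W*(M:ℝ)^(e-1)) atTop (nhds 0) := by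
      have h1 : Tendsto (fun x : ℝ => x^(e-1)) atTop (nhds 0) := by
        have := tendsto_rpow_neg_atTop (by linarith : (0:ℝ) < 1 - e)
        simpa [neg_sub] using this
      have h2 := (h1.comp tendsto_natCast_atTop_atTop).const_mul (τ*(σRF2+σ2)*W)
      rw [mul_zero] at h2
      exact h2
    have hdenlim : Tendsto den atTop
        (nhds (Eu*τ^2*(∑ i ∈ Finset.univ.erase k, D i*(z1 i*ι^2)) + 0 + 0)) :=
      (hsumlim.add hZlim).add htlim
    have hDpos' : (0:ℝ) <
        Eu*τ^2*(∑ i ∈ Finset.univ.erase k, D i*(z1 i*ι^2)) + 0 + 0 := by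
      rw [add_zero, add_zero, hsum_eq]
      exact mul_pos hEu hpos
    have hr : Tendsto (fun M : ℕ => num M / den M) atTop
        (nhds ((Eu*τ^2*C1*(c1*ι^2)) /
          (Eu*τ^2*(∑ i ∈ Finset.univ.erase k, D i*(z1 i*ι^2)) + 0 + 0))) :=
      hnumlim.div hdenlim (ne_of_gt hDpos')
    have hLnn : 0 ≤ (Eu*τ^2*C1*(c1*ι^2)) /
        (Eu*τ^2*(∑ i ∈ Finset.univ.erase k, D i*(z1 i*ι^2)) + 0 + 0) := by
      apply div_nonneg _ hDpos'.le
      exact mul_nonneg (mul_nonneg (mul_nonneg hEu.le (sq_nonneg τ)) hC1nn)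
        (mul_nonneg hc1nn (sq_nonneg ι))
    have hfin : Tendsto (fun M : ℕ => Real.logb 2 (1 + num M / den M)) atTop
        (nhds (Real.logb 2 (1 + (Eu*τ^2*C1*(c1*ι^2)) /
          (Eu*τ^2*(∑ i ∈ Finset.univ.erase k, D i*(z1 i*ι^2)) + 0 + 0)))) := by
      have hcont : ContinuousAt (Real.logb 2) _ :=
        Real.continuousAt_logb (by linarith : (1:ℝ) + _ ≠ 0)
      exact hcont.tendsto.comp (tendsto_const_nhds.add hr)
    have heq : Real.logb 2 (1 + (Eu*τ^2*C1*(c1*ι^2)) /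
          (Eu*τ^2*(∑ i ∈ Finset.univ.erase k, D i*(z1 i*ι^2)) + 0 + 0))
        = Real.logb 2 (1 +
          GammaK N (α k) (μ k) β δ ρ ι κ τ (f k) /
          (∑ i ∈ Finset.univ.erase k,
            GammaKI N (α k) (α i) (μ k) (μ i) β δ ρ ι κ τ (f k) (f i) (b i))) := by
      congr 1
      rw [add_zero, add_zero, hsum_eq]
      have hnum_eq : Eu*τ^2*C1*(c1*ι^2) = Eu * GammaK N (α k) (μ k) β δ ρ ι κ τ (f k) := by
        simp only [hC1def, hc1def, GammaK]; ring
      rw [hnum_eq, mul_div_mul_left _ _ (ne_of_gt hEu)]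
    rw [heq] at hfin
    refine Tendsto.congr' ?_ hfin
    filter_upwards [eventually_ge_atTop 1] with M hM
    exact (hkey M hM).symm

end
end

section
/- Let ε_1, …, ε_N be i.i.d. real random variables such that ρ := E[e^{iε_1}] is a real number, let φ_1, …, φ_M be i.i.d. real random variables, independent of (ε_n), such that ι := E[e^{iφ_1}] is a real number, let f_1, …, f_N be complex numbers with |f_n| = 1 for every n, and let g be any complex number. Then E[|g · (Σ_{m=1}^M e^{iφ_m}) · (Σ_{n=1}^N f_n·e^{iε_n})|²] = |g|² · M·(ι²M + 1 − ι²) · ((1−ρ²)·N + ρ²·|Σ_{n=1}^N f_n|²). -/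
open MeasureTheory ProbabilityTheory Filter Finset

section SMAux
set_option linter.unusedSectionVars false

variable {Ω : Type*} [MeasureSpace Ω] [IsProbabilityMeasure (ℙ : Measure Ω)]

lemma integrable_of_bdd {f : Ω → ℂ} (hm : Measurable f) (C : ℝ) (h : ∀ ω, ‖f ω‖ ≤ C) :
    Integrable f ℙ :=
  ⟨hm.aestronglyMeasurable, HasFiniteIntegral.of_bounded (ae_of_all _ h)⟩

lemma re_integral {f : Ω → ℂ} (hf : Integrable f ℙ) :
    (∫ ω, f ω ∂ℙ).re = ∫ ω, (f ω).re ∂ℙ := by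
  simpa using (integral_re hf).symm

lemma im_integral {f : Ω → ℂ} (hf : Integrable f ℙ) :
    (∫ ω, f ω ∂ℙ).im = ∫ ω, (f ω).im ∂ℙ := by
  simpa using (integral_im hf).symm

lemma integrable_re_mul {X Y : Ω → ℂ} (hXm : Measurable X) (hYm : Measurable Y)
    (hX : ∀ ω, ‖X ω‖ ≤ 1) (hY : ∀ ω, ‖Y ω‖ ≤ 1)
    (p q : ℂ → ℝ) (hp : Measurable p) (hq : Measurable q)
    (hpb : ∀ z : ℂ, |p z| ≤ ‖z‖) (hqb : ∀ z : ℂ, |q z| ≤ ‖z‖) :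
    Integrable (fun ω => p (X ω) * q (Y ω)) ℙ := by
  refine ⟨((hp.comp hXm).mul (hq.comp hYm)).aestronglyMeasurable,
    HasFiniteIntegral.of_bounded (C := 1) (ae_of_all _ fun ω => ?_)⟩
  have : ‖p (X ω) * q (Y ω)‖ = |p (X ω)| * |q (Y ω)| := by
    simp [abs_mul]
  rw [this]
  refine (mul_le_mul (hpb _) (hqb _) (abs_nonneg _) (norm_nonneg _)).trans ?_
  nlinarith [hX ω, hY ω, norm_nonneg (X ω), norm_nonneg (Y ω)]

lemma indep_integral_mul_complex {X Y : Ω → ℂ} (h : IndepFun X Y ℙ)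
    (hXm : Measurable X) (hYm : Measurable Y)
    (hX : ∀ ω, ‖X ω‖ ≤ 1) (hY : ∀ ω, ‖Y ω‖ ≤ 1) :
    ∫ ω, X ω * Y ω ∂ℙ = (∫ ω, X ω ∂ℙ) * ∫ ω, Y ω ∂ℙ := by
  have hXi : Integrable X ℙ := integrable_of_bdd hXm 1 hX
  have hYi : Integrable Y ℙ := integrable_of_bdd hYm 1 hY
  have hXYi : Integrable (fun ω => X ω * Y ω) ℙ := by
    refine integrable_of_bdd (hXm.mul hYm) 1 fun ω => ?_
    calc ‖X ω * Y ω‖ = ‖X ω‖ * ‖Y ω‖ := norm_mul _ _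
    _ ≤ 1 * 1 := mul_le_mul (hX ω) (hY ω) (norm_nonneg _) zero_le_one
    _ = 1 := one_mul 1
  have key : ∀ (p q : ℂ → ℝ), Measurable p → Measurable q →
      (∀ z : ℂ, |p z| ≤ ‖z‖) → (∀ z : ℂ, |q z| ≤ ‖z‖) →
      ∫ ω, p (X ω) * q (Y ω) ∂ℙ = (∫ ω, p (X ω) ∂ℙ) * ∫ ω, q (Y ω) ∂ℙ := by
    intro p q hp hq hpb hqb
    exact (h.comp hp hq).integral_mul_eq_mul_integral (hp.comp hXm).aestronglyMeasurable
      (hq.comp hYm).aestronglyMeasurable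
  have hre : ∀ z : ℂ, |z.re| ≤ ‖z‖ := fun z => Complex.abs_re_le_norm z
  have him : ∀ z : ℂ, |z.im| ≤ ‖z‖ := fun z => Complex.abs_im_le_norm z
  apply Complex.ext
  · rw [re_integral hXYi, Complex.mul_re, re_integral hXi, re_integral hYi,
      im_integral hXi, im_integral hYi]
    simp only [Complex.mul_re]
    rw [integral_sub (integrable_re_mul hXm hYm hX hY _ _ Complex.measurable_re
        Complex.measurable_re hre hre)
      (integrable_re_mul hXm hYm hX hY _ _ Complex.measurable_im Complex.measurable_im him him),
      key _ _ Complex.measurable_re Complex.measurable_re hre hre,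
      key _ _ Complex.measurable_im Complex.measurable_im him him]
  · rw [im_integral hXYi, Complex.mul_im, re_integral hXi, re_integral hYi,
      im_integral hXi, im_integral hYi]
    simp only [Complex.mul_im]
    rw [integral_add (integrable_re_mul hXm hYm hX hY _ _ Complex.measurable_re
        Complex.measurable_im hre him)
      (integrable_re_mul hXm hYm hX hY _ _ Complex.measurable_im Complex.measurable_re him hre),
      key _ _ Complex.measurable_re Complex.measurable_im hre him,
      key _ _ Complex.measurable_im Complex.measurable_re him hre]

lemma integral_prod_of_iIndepFun {ι : Type*} (X : ι → Ω → ℂ) (hmeas : ∀ i, Measurable (X i))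
    (hbd : ∀ i ω, ‖X i ω‖ ≤ 1)
    (hind : iIndepFun (m := fun _ => inferInstance) X ℙ) (s : Finset ι) :
    ∫ ω, ∏ i ∈ s, X i ω ∂ℙ = ∏ i ∈ s, ∫ ω, X i ω ∂ℙ := by
  classical
  induction s using Finset.induction_on with
  | empty => simp
  | insert a s hns ih =>
    have hprodbd : ∀ ω, ‖∏ i ∈ s, X i ω‖ ≤ 1 := by
      intro ω
      calc ‖∏ i ∈ s, X i ω‖ ≤ ∏ i ∈ s, ‖X i ω‖ := norm_prod_le _ _
      _ ≤ ∏ i ∈ s, 1 := Finset.prod_le_prod (fun i _ => norm_nonneg _) (fun i _ => hbd i ω)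
      _ = 1 := Finset.prod_const_one
    have hip : IndepFun (X a) (fun ω => ∏ j ∈ s, X j ω) ℙ := by
      have := (hind.indepFun_finsetProd_of_notMem hmeas hns).symm
      have he : (∏ j ∈ s, X j) = fun ω => ∏ j ∈ s, X j ω := by
        funext ω; exact Finset.prod_apply ω s X
      rwa [he] at this
    rw [Finset.prod_insert hns, ← ih,
      show (∫ ω, ∏ i ∈ insert a s, X i ω ∂ℙ) = ∫ ω, X a ω * ∏ i ∈ s, X i ω ∂ℙ
        from by simp [Finset.prod_insert hns]]
    exact indep_integral_mul_complex hip (hmeas a)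
      (s.measurable_prod fun i _ => hmeas i) (hbd a) hprodbd

lemma abs_exp_I_mul (x : ℝ) : ‖Complex.exp (Complex.I * x)‖ = 1 := by
  rw [Complex.norm_exp]
  simp [Complex.mul_re]

lemma exp_mul_conj_exp (x : ℝ) :
    Complex.exp (Complex.I * x) * (starRingEnd ℂ) (Complex.exp (Complex.I * x)) = 1 := by
  rw [Complex.mul_conj]
  norm_cast
  simp [Complex.normSq_eq_norm_sq, abs_exp_I_mul]

lemma measurable_exp_I_mul : Measurable (fun x : ℝ => Complex.exp (Complex.I * x)) :=
  Complex.measurable_exp.comp (measurable_const.mul Complex.measurable_ofReal)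

lemma prod_single {κ : Type*} [Fintype κ] [DecidableEq κ]
    (ν : Measure ℝ) [IsProbabilityMeasure ν] (r : ℝ)
    (hr : ∫ x, Complex.exp (Complex.I * x) ∂ν = (r : ℂ)) (k k' : κ) :
    (∏ a : κ, ∫ x, (if a = k then Complex.exp (Complex.I * x) else 1) *
        (if a = k' then (starRingEnd ℂ) (Complex.exp (Complex.I * x)) else 1) ∂ν)
      = if k = k' then 1 else (r : ℂ) * r := by
  classical
  have hconj : ∫ x, (starRingEnd ℂ) (Complex.exp (Complex.I * x)) ∂ν = (r : ℂ) := by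
    rw [integral_conj, hr, Complex.conj_ofReal]
  by_cases hkk : k = k'
  · subst hkk
    rw [if_pos rfl]
    apply Finset.prod_eq_one
    intro a _
    by_cases ha : a = k
    · simp [ha, exp_mul_conj_exp]
    · simp [ha]
  · rw [if_neg hkk]
    have hv : ∀ a : κ, (∫ x, (if a = k then Complex.exp (Complex.I * x) else 1) *
        (if a = k' then (starRingEnd ℂ) (Complex.exp (Complex.I * x)) else 1) ∂ν)
        = (if a = k then (r : ℂ) else 1) * (if a = k' then (r : ℂ) else 1) := by
      intro a
      by_cases h1 : a = k
      · have h2 : ¬ a = k' := by rw [h1]; exact hkk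
        simp [h1, h2, hkk, hr]
      · by_cases h2 : a = k'
        · simp [h1, h2, Ne.symm hkk, hconj]
        · simp [h1, h2]
    rw [Finset.prod_congr rfl (fun a _ => hv a), Finset.prod_mul_distrib]
    simp [Finset.prod_ite_eq']

lemma expectation_term
    {N M : ℕ}
    (ε : Fin N → Ω → ℝ) (φ : Fin M → Ω → ℝ)
    (hε_meas : ∀ n, Measurable (ε n)) (hφ_meas : ∀ m, Measurable (φ m))
    (h_indep : iIndepFun (β := fun _ => ℝ) (m := fun _ => inferInstance)
      (Sum.elim ε φ : Fin N ⊕ Fin M → Ω → ℝ) ℙ)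
    (νε : Measure ℝ) [IsProbabilityMeasure νε] (hε_law : ∀ n, Measure.map (ε n) ℙ = νε)
    (ρ : ℝ) (hρ : ∫ x, Complex.exp (Complex.I * x) ∂νε = (ρ : ℂ))
    (νφ : Measure ℝ) [IsProbabilityMeasure νφ] (hφ_law : ∀ m, Measure.map (φ m) ℙ = νφ)
    (ι : ℝ) (hι : ∫ x, Complex.exp (Complex.I * x) ∂νφ = (ι : ℂ))
    (m m' : Fin M) (n n' : Fin N) :
    ∫ ω, Complex.exp (Complex.I * φ m ω) * (starRingEnd ℂ) (Complex.exp (Complex.I * φ m' ω))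
        * (Complex.exp (Complex.I * ε n ω) * (starRingEnd ℂ) (Complex.exp (Complex.I * ε n' ω))) ∂ℙ
      = (if m = m' then 1 else (ι : ℂ) * ι) * (if n = n' then 1 else (ρ : ℂ) * ρ) := by
  classical
  set u : ℝ → ℂ := fun x => Complex.exp (Complex.I * x) with hu_def
  have hu : Measurable u := measurable_exp_I_mul
  have hus : Measurable (fun x => (starRingEnd ℂ) (u x)) := by
    exact continuous_star.measurable.comp hu
  have hub : ∀ x, ‖u x‖ ≤ 1 := fun x => le_of_eq (abs_exp_I_mul x)
  set h : Fin N ⊕ Fin M → ℝ → ℂ := fun j x =>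
    (if j = Sum.inr m then u x else 1) * (if j = Sum.inr m' then (starRingEnd ℂ) (u x) else 1) *
    ((if j = Sum.inl n then u x else 1) * (if j = Sum.inl n' then (starRingEnd ℂ) (u x) else 1))
    with hh_def
  have hite : ∀ (c : Prop) [Decidable c] (w : ℝ → ℂ), Measurable w →
      Measurable (fun x => if c then w x else 1) := by
    intro c _ w hw
    by_cases hc : c
    · simpa [hc] using hw
    · simp [hc]
  have hiteb : ∀ (c : Prop) [Decidable c] (w : ℝ → ℂ), (∀ x, ‖w x‖ ≤ 1) →
      ∀ x, ‖(if c then w x else 1 : ℂ)‖ ≤ 1 := by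
    intro c _ w hw x
    split_ifs with hc
    · exact hw x
    · simp
  have hhmeas : ∀ j, Measurable (h j) := by
    intro j
    exact ((hite _ _ hu).mul (hite _ _ hus)).mul ((hite _ _ hu).mul (hite _ _ hus))
  have husb : ∀ x, ‖(starRingEnd ℂ) (u x)‖ ≤ 1 := by
    intro x; rw [RCLike.norm_conj]; exact hub x
  have hhb : ∀ j x, ‖h j x‖ ≤ 1 := by
    intro j x
    rw [hh_def]
    simp only [norm_mul]
    have b1 := hiteb (j = Sum.inr m) (u) hub x
    have b2 := hiteb (j = Sum.inr m') _ husb x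
    have b3 := hiteb (j = Sum.inl n) (u) hub x
    have b4 := hiteb (j = Sum.inl n') _ husb x
    have hpq : ‖(if j = Sum.inr m then u x else 1 : ℂ)‖ *
        ‖(if j = Sum.inr m' then (starRingEnd ℂ) (u x) else 1 : ℂ)‖ ≤ 1 := by
      simpa using mul_le_mul b1 b2 (norm_nonneg _) zero_le_one
    have hst : ‖(if j = Sum.inl n then u x else 1 : ℂ)‖ *
        ‖(if j = Sum.inl n' then (starRingEnd ℂ) (u x) else 1 : ℂ)‖ ≤ 1 := by
      simpa using mul_le_mul b3 b4 (norm_nonneg _) zero_le_one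
    simpa using mul_le_mul hpq hst (mul_nonneg (norm_nonneg _) (norm_nonneg _)) zero_le_one
  set W : Fin N ⊕ Fin M → Ω → ℂ := fun j ω => h j (Sum.elim ε φ j ω) with hW_def
  have hZmeas : ∀ j, Measurable (Sum.elim ε φ j) := by
    intro j; cases j with
    | inl a => exact hε_meas a
    | inr b => exact hφ_meas b
  have hWmeas : ∀ j, Measurable (W j) := fun j => (hhmeas j).comp (hZmeas j)
  have hWb : ∀ j ω, ‖W j ω‖ ≤ 1 := fun j ω => hhb j _
  have hWind : iIndepFun (m := fun _ => inferInstance) W ℙ := h_indep.comp h hhmeas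
  -- pointwise identity
  have hpt : ∀ ω, (∏ j, W j ω) =
      u (φ m ω) * (starRingEnd ℂ) (u (φ m' ω)) * (u (ε n ω) * (starRingEnd ℂ) (u (ε n' ω))) := by
    intro ω
    rw [hW_def]
    simp only [hh_def]
    rw [Finset.prod_mul_distrib, Finset.prod_mul_distrib, Finset.prod_mul_distrib]
    simp [Finset.prod_ite_eq']
  have step1 : ∫ ω, u (φ m ω) * (starRingEnd ℂ) (u (φ m' ω))
      * (u (ε n ω) * (starRingEnd ℂ) (u (ε n' ω))) ∂ℙ = ∏ j, ∫ ω, W j ω ∂ℙ := by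
    rw [← integral_prod_of_iIndepFun W hWmeas hWb hWind Finset.univ]
    exact integral_congr_ae (ae_of_all _ fun ω => (hpt ω).symm)
  rw [hu_def] at step1
  rw [step1, Fintype.prod_sum_type]
  -- ε part
  have hεpart : ∀ a : Fin N, ∫ ω, W (Sum.inl a) ω ∂ℙ
      = ∫ x, (if a = n then u x else 1) * (if a = n' then (starRingEnd ℂ) (u x) else 1) ∂νε := by
    intro a
    have hk : Measurable (fun x => (if a = n then u x else 1) *
        (if a = n' then (starRingEnd ℂ) (u x) else 1)) := (hite _ _ hu).mul (hite _ _ hus)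
    have : W (Sum.inl a) = fun ω => ((fun x => (if a = n then u x else 1) *
        (if a = n' then (starRingEnd ℂ) (u x) else 1))) (ε a ω) := by
      funext ω
      rw [hW_def, hh_def]
      simp
    rw [this, ← hε_law a, integral_map (hε_meas a).aemeasurable hk.aestronglyMeasurable]
  have hφpart : ∀ b : Fin M, ∫ ω, W (Sum.inr b) ω ∂ℙ
      = ∫ x, (if b = m then u x else 1) * (if b = m' then (starRingEnd ℂ) (u x) else 1) ∂νφ := by
    intro b
    have hk : Measurable (fun x => (if b = m then u x else 1) *
        (if b = m' then (starRingEnd ℂ) (u x) else 1)) := (hite _ _ hu).mul (hite _ _ hus)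
    have : W (Sum.inr b) = fun ω => ((fun x => (if b = m then u x else 1) *
        (if b = m' then (starRingEnd ℂ) (u x) else 1))) (φ b ω) := by
      funext ω
      rw [hW_def, hh_def]
      simp
    rw [this, ← hφ_law b, integral_map (hφ_meas b).aemeasurable hk.aestronglyMeasurable]
  rw [Finset.prod_congr rfl (fun a _ => hεpart a), Finset.prod_congr rfl (fun b _ => hφpart b),
    prod_single νε ρ hρ n n', prod_single νφ ι hι m m', mul_comm]

lemma main_complex
    {N M : ℕ}
    (ε : Fin N → Ω → ℝ) (φ : Fin M → Ω → ℝ)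
    (hε_meas : ∀ n, Measurable (ε n)) (hφ_meas : ∀ m, Measurable (φ m))
    (h_indep : iIndepFun (β := fun _ => ℝ) (m := fun _ => inferInstance)
      (Sum.elim ε φ : Fin N ⊕ Fin M → Ω → ℝ) ℙ)
    (νε : Measure ℝ) [IsProbabilityMeasure νε] (hε_law : ∀ n, Measure.map (ε n) ℙ = νε)
    (ρ : ℝ) (hρ : ∫ x, Complex.exp (Complex.I * x) ∂νε = (ρ : ℂ))
    (νφ : Measure ℝ) [IsProbabilityMeasure νφ] (hφ_law : ∀ m, Measure.map (φ m) ℙ = νφ)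
    (ι : ℝ) (hι : ∫ x, Complex.exp (Complex.I * x) ∂νφ = (ι : ℂ))
    (f : Fin N → ℂ) (hf : ∀ n, ‖f n‖ = 1) (g : ℂ) :
    ∫ ω, (g * (∑ m, Complex.exp (Complex.I * φ m ω)) * (∑ n, f n * Complex.exp (Complex.I * ε n ω)))
        * (starRingEnd ℂ) (g * (∑ m, Complex.exp (Complex.I * φ m ω))
            * (∑ n, f n * Complex.exp (Complex.I * ε n ω))) ∂ℙ
      = (g * (starRingEnd ℂ) g) * ((M : ℂ) * (M : ℂ) * ((ι : ℂ) * ι) + (M : ℂ) * (1 - (ι : ℂ) * ι))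
        * ((ρ : ℂ) * ρ * ((∑ n, f n) * (starRingEnd ℂ) (∑ n, f n)) + (N : ℂ) * (1 - (ρ : ℂ) * ρ)) := by
  classical
  have hu : Measurable (fun x : ℝ => Complex.exp (Complex.I * x)) := measurable_exp_I_mul
  -- abbreviation for the elementary term
  set T : Fin M → Fin M → Fin N → Fin N → Ω → ℂ := fun m m' n n' ω =>
    Complex.exp (Complex.I * φ m ω) * (starRingEnd ℂ) (Complex.exp (Complex.I * φ m' ω))
      * (Complex.exp (Complex.I * ε n ω) * (starRingEnd ℂ) (Complex.exp (Complex.I * ε n' ω)))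
    with hT_def
  have hTmeas : ∀ m m' n n', Measurable (T m m' n n') := by
    intro m m' n n'
    exact ((hu.comp (hφ_meas m)).mul
        (continuous_star.measurable.comp (hu.comp (hφ_meas m')))).mul
      ((hu.comp (hε_meas n)).mul (continuous_star.measurable.comp (hu.comp (hε_meas n'))))
  have hTb : ∀ m m' n n' ω, ‖T m m' n n' ω‖ ≤ 1 := by
    intro m m' n n' ω
    simp [hT_def, map_mul, abs_exp_I_mul]
  have hTint : ∀ m m' n n', Integrable (T m m' n n') ℙ :=
    fun m m' n n' => integrable_of_bdd (hTmeas m m' n n') 1 (hTb m m' n n')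
  have hkey : ∀ m m' n n', ∫ ω, T m m' n n' ω ∂ℙ
      = (if m = m' then 1 else (ι : ℂ) * ι) * (if n = n' then 1 else (ρ : ℂ) * ρ) :=
    fun m m' n n' => expectation_term ε φ hε_meas hφ_meas h_indep νε hε_law ρ hρ νφ hφ_law ι hι m m' n n'
  -- pointwise expansion
  have expand : ∀ ω, (g * (∑ m, Complex.exp (Complex.I * φ m ω))
        * (∑ n, f n * Complex.exp (Complex.I * ε n ω)))
      * (starRingEnd ℂ) (g * (∑ m, Complex.exp (Complex.I * φ m ω))
        * (∑ n, f n * Complex.exp (Complex.I * ε n ω)))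
      = ∑ m, ∑ n, ∑ m', ∑ n',
          (g * (starRingEnd ℂ) g) * (f n * (starRingEnd ℂ) (f n')) * T m m' n n' ω := by
    intro ω
    calc (g * (∑ m, Complex.exp (Complex.I * φ m ω))
        * (∑ n, f n * Complex.exp (Complex.I * ε n ω)))
      * (starRingEnd ℂ) (g * (∑ m, Complex.exp (Complex.I * φ m ω))
        * (∑ n, f n * Complex.exp (Complex.I * ε n ω)))
        = (g * (starRingEnd ℂ) g) *
          (((∑ m, Complex.exp (Complex.I * φ m ω))
              * (∑ m', (starRingEnd ℂ) (Complex.exp (Complex.I * φ m' ω))))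
            * ((∑ n, f n * Complex.exp (Complex.I * ε n ω))
              * (∑ n', (starRingEnd ℂ) (f n') * (starRingEnd ℂ) (Complex.exp (Complex.I * ε n' ω))))) := by
          simp only [map_mul, map_sum]
          ring
      _ = (g * (starRingEnd ℂ) g) * (∑ m, ∑ n, ∑ m', ∑ n',
            (Complex.exp (Complex.I * φ m ω) * (starRingEnd ℂ) (Complex.exp (Complex.I * φ m' ω)))
            * ((f n * Complex.exp (Complex.I * ε n ω))
              * ((starRingEnd ℂ) (f n') * (starRingEnd ℂ) (Complex.exp (Complex.I * ε n' ω))))) := by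
          rw [Finset.sum_mul_sum, Finset.sum_mul_sum, Finset.sum_mul_sum]
          congr 1
          refine Finset.sum_congr rfl fun m _ => Finset.sum_congr rfl fun n _ => ?_
          rw [Finset.sum_mul_sum]
      _ = ∑ m, ∑ n, ∑ m', ∑ n',
            (g * (starRingEnd ℂ) g) * (f n * (starRingEnd ℂ) (f n')) * T m m' n n' ω := by
          simp only [Finset.mul_sum]
          refine Finset.sum_congr rfl fun m _ => Finset.sum_congr rfl fun n _ =>
            Finset.sum_congr rfl fun m' _ => Finset.sum_congr rfl fun n' _ => ?_
          rw [hT_def]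
          ring
  rw [integral_congr_ae (ae_of_all _ expand)]
  have hint : ∀ (c : ℂ) m m' n n', Integrable (fun ω => c * T m m' n n' ω) ℙ :=
    fun c m m' n n' => (hTint m m' n n').const_mul c
  rw [integral_finset_sum _ (fun m _ => integrable_finset_sum _ (fun n _ =>
    integrable_finset_sum _ (fun m' _ => integrable_finset_sum _ (fun n' _ => hint _ m m' n n'))))]
  have swap2 : ∀ m, (∫ ω, ∑ n, ∑ m', ∑ n',
        (g * (starRingEnd ℂ) g) * (f n * (starRingEnd ℂ) (f n')) * T m m' n n' ω ∂ℙ)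
      = ∑ n, ∑ m', ∑ n', (g * (starRingEnd ℂ) g) * (f n * (starRingEnd ℂ) (f n'))
          * ((if m = m' then 1 else (ι : ℂ) * ι) * (if n = n' then 1 else (ρ : ℂ) * ρ)) := by
    intro m
    rw [integral_finset_sum _ (fun n _ => integrable_finset_sum _ (fun m' _ =>
      integrable_finset_sum _ (fun n' _ => hint _ m m' n n')))]
    refine Finset.sum_congr rfl fun n _ => ?_
    rw [integral_finset_sum _ (fun m' _ => integrable_finset_sum _ (fun n' _ => hint _ m m' n n'))]
    refine Finset.sum_congr rfl fun m' _ => ?_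
    rw [integral_finset_sum _ (fun n' _ => hint _ m m' n n')]
    refine Finset.sum_congr rfl fun n' _ => ?_
    rw [integral_const_mul, hkey m m' n n']
  rw [Finset.sum_congr rfl fun m _ => swap2 m]
  -- now pure algebra
  have halg : (∑ m : Fin M, ∑ n : Fin N, ∑ m' : Fin M, ∑ n' : Fin N,
        (g * (starRingEnd ℂ) g) * (f n * (starRingEnd ℂ) (f n'))
          * ((if m = m' then 1 else (ι : ℂ) * ι) * (if n = n' then 1 else (ρ : ℂ) * ρ)))
      = (∑ m : Fin M, ∑ m' : Fin M, (if m = m' then 1 else (ι : ℂ) * ι))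
        * (∑ n : Fin N, ∑ n' : Fin N, (g * (starRingEnd ℂ) g) * (f n * (starRingEnd ℂ) (f n'))
            * (if n = n' then 1 else (ρ : ℂ) * ρ)) := by
    rw [Finset.sum_mul_sum]
    refine Finset.sum_congr rfl fun m _ => Finset.sum_congr rfl fun n _ => ?_
    rw [Finset.sum_mul_sum]
    exact Finset.sum_congr rfl fun m' _ => Finset.sum_congr rfl fun n' _ => by ring
  have hA : (∑ m : Fin M, ∑ m' : Fin M, (if m = m' then 1 else (ι : ℂ) * ι))
      = (M : ℂ) * (M : ℂ) * ((ι : ℂ) * ι) + (M : ℂ) * (1 - (ι : ℂ) * ι) := by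
    have h1 : ∀ m m' : Fin M, (if m = m' then (1 : ℂ) else (ι : ℂ) * ι)
        = (ι : ℂ) * ι + (if m = m' then 1 - (ι : ℂ) * ι else 0) := by
      intro m m'; split_ifs <;> ring
    simp only [h1, Finset.sum_add_distrib, Finset.sum_const, Finset.sum_ite_eq,
      Finset.mem_univ, if_true, Finset.card_univ, Fintype.card_fin, nsmul_eq_mul]
    ring
  have hf1 : ∀ n, f n * (starRingEnd ℂ) (f n) = 1 := by
    intro n
    rw [Complex.mul_conj, Complex.normSq_eq_norm_sq, hf n]
    norm_num
  have hB : (∑ n : Fin N, ∑ n' : Fin N, (g * (starRingEnd ℂ) g) * (f n * (starRingEnd ℂ) (f n'))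
        * (if n = n' then 1 else (ρ : ℂ) * ρ))
      = (g * (starRingEnd ℂ) g) * ((ρ : ℂ) * ρ * ((∑ n, f n) * (starRingEnd ℂ) (∑ n, f n))
          + (N : ℂ) * (1 - (ρ : ℂ) * ρ)) := by
    have h1 : ∀ n n' : Fin N, (g * (starRingEnd ℂ) g) * (f n * (starRingEnd ℂ) (f n'))
        * (if n = n' then 1 else (ρ : ℂ) * ρ)
        = ((g * (starRingEnd ℂ) g) * ((ρ : ℂ) * ρ)) * (f n * (starRingEnd ℂ) (f n'))
          + (if n = n' then ((g * (starRingEnd ℂ) g) * (1 - (ρ : ℂ) * ρ)) * (f n * (starRingEnd ℂ) (f n')) else 0) := by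
      intro n n'; split_ifs <;> ring
    have hSS : (∑ n : Fin N, ∑ n' : Fin N, f n * (starRingEnd ℂ) (f n'))
        = (∑ n, f n) * (starRingEnd ℂ) (∑ n, f n) := by
      rw [map_sum, Finset.sum_mul_sum]
    simp only [h1, Finset.sum_add_distrib, Finset.sum_ite_eq, Finset.mem_univ, if_true,
      ← Finset.mul_sum, hSS, hf1, Finset.sum_const, Finset.card_univ, Fintype.card_fin,
      nsmul_eq_mul, mul_one]
    simp only [map_sum, ← Finset.sum_mul]
    ring
  rw [halg, hA, hB]
  ring


end SMAux

/-- eq. (56) in the paper: for mutually independent i.i.d. families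
`(ε_n)` with `ρ := E[e^{iε_1}]` real and `(φ_m)` with `ι := E[e^{iφ_1}]` real, unit-modulus
`f_n` and any complex `g`,
`E[|g (Σ_m e^{iφ_m})(Σ_n f_n e^{iε_n})|²] = |g|² M(ι²M+1−ι²)((1−ρ²)N + ρ²|Σ_n f_n|²)`. -/
theorem second_moment_product_of_phase_sums
    {Ω : Type*} [MeasureSpace Ω] [IsProbabilityMeasure (ℙ : Measure Ω)]
    (N M : ℕ) (hN : 0 < N) (hM : 0 < M)
    (ε : Fin N → Ω → ℝ) (φ : Fin M → Ω → ℝ)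
    (hε_meas : ∀ n, Measurable (ε n)) (hφ_meas : ∀ m, Measurable (φ m))
    (h_indep : iIndepFun (β := fun _ => ℝ) (m := fun _ => inferInstance)
      (Sum.elim ε φ : Fin N ⊕ Fin M → Ω → ℝ) ℙ)
    (νε : Measure ℝ) [IsProbabilityMeasure νε] (hε_law : ∀ n, Measure.map (ε n) ℙ = νε)
    (ρ : ℝ) (hρ : ∫ x, Complex.exp (Complex.I * x) ∂νε = (ρ : ℂ))
    (νφ : Measure ℝ) [IsProbabilityMeasure νφ] (hφ_law : ∀ m, Measure.map (φ m) ℙ = νφ)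
    (ι : ℝ) (hι : ∫ x, Complex.exp (Complex.I * x) ∂νφ = (ι : ℂ))
    (f : Fin N → ℂ) (hf : ∀ n, ‖f n‖ = 1) (g : ℂ) :
    ∫ ω, (‖g * (∑ m, Complex.exp (Complex.I * φ m ω))
        * (∑ n, f n * Complex.exp (Complex.I * ε n ω))‖)^2 ∂ℙ
      = ‖g‖^2 * (M:ℝ) * (ι^2*(M:ℝ) + 1 - ι^2)
        * ((1-ρ^2)*(N:ℝ) + ρ^2*‖∑ n, f n‖^2) := by
  classical
  have hu : Measurable (fun x : ℝ => Complex.exp (Complex.I * x)) := measurable_exp_I_mul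
  have habs : ∀ z : ℂ, ‖z‖^2 = (z * (starRingEnd ℂ) z).re := by
    intro z
    rw [Complex.mul_conj]
    simp [Complex.sq_norm]
  have mW : Measurable (fun ω => g * (∑ m, Complex.exp (Complex.I * φ m ω))
      * (∑ n, f n * Complex.exp (Complex.I * ε n ω))) := by
    refine (measurable_const.mul (Finset.measurable_sum _ fun m _ => hu.comp (hφ_meas m))).mul
      (Finset.measurable_sum _ fun n _ => measurable_const.mul (hu.comp (hε_meas n)))
  have hWb : ∀ ω, ‖g * (∑ m, Complex.exp (Complex.I * φ m ω))
      * (∑ n, f n * Complex.exp (Complex.I * ε n ω))‖ ≤ ‖g‖ * M * N := by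
    intro ω
    have hA1 : ‖∑ m : Fin M, Complex.exp (Complex.I * φ m ω)‖ ≤ (M : ℝ) :=
      (norm_sum_le _ _).trans (le_of_eq (by
        simp [abs_exp_I_mul]))
    have hB1 : ‖∑ n : Fin N, f n * Complex.exp (Complex.I * ε n ω)‖ ≤ (N : ℝ) :=
      (norm_sum_le _ _).trans (le_of_eq (by
        simp [map_mul, abs_exp_I_mul, hf]))
    rw [norm_mul, norm_mul]
    have h1 : ‖g‖ * ‖∑ m : Fin M, Complex.exp (Complex.I * φ m ω)‖ ≤ ‖g‖ * M :=
      mul_le_mul_of_nonneg_left hA1 (norm_nonneg g)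
    exact mul_le_mul h1 hB1 (norm_nonneg _) (by positivity)
  have hWWint : Integrable (fun ω => (g * (∑ m, Complex.exp (Complex.I * φ m ω))
      * (∑ n, f n * Complex.exp (Complex.I * ε n ω)))
      * (starRingEnd ℂ) (g * (∑ m, Complex.exp (Complex.I * φ m ω))
      * (∑ n, f n * Complex.exp (Complex.I * ε n ω)))) ℙ := by
    refine integrable_of_bdd (mW.mul (continuous_star.measurable.comp mW))
      ((‖g‖ * M * N) * (‖g‖ * M * N)) fun ω => ?_
    rw [norm_mul, RCLike.norm_conj]
    exact mul_le_mul (hWb ω) (hWb ω) (norm_nonneg _) (by positivity)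
  calc ∫ ω, (‖g * (∑ m, Complex.exp (Complex.I * φ m ω))
        * (∑ n, f n * Complex.exp (Complex.I * ε n ω))‖)^2 ∂ℙ
      = ∫ ω, ((g * (∑ m, Complex.exp (Complex.I * φ m ω))
          * (∑ n, f n * Complex.exp (Complex.I * ε n ω)))
          * (starRingEnd ℂ) (g * (∑ m, Complex.exp (Complex.I * φ m ω))
          * (∑ n, f n * Complex.exp (Complex.I * ε n ω)))).re ∂ℙ :=
        integral_congr_ae (ae_of_all _ fun ω => habs _)
    _ = (∫ ω, (g * (∑ m, Complex.exp (Complex.I * φ m ω))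
          * (∑ n, f n * Complex.exp (Complex.I * ε n ω)))
          * (starRingEnd ℂ) (g * (∑ m, Complex.exp (Complex.I * φ m ω))
          * (∑ n, f n * Complex.exp (Complex.I * ε n ω))) ∂ℙ).re :=
        (re_integral hWWint).symm
    _ = ((g * (starRingEnd ℂ) g) * ((M : ℂ) * (M : ℂ) * ((ι : ℂ) * ι) + (M : ℂ) * (1 - (ι : ℂ) * ι))
        * ((ρ : ℂ) * ρ * ((∑ n, f n) * (starRingEnd ℂ) (∑ n, f n))
          + (N : ℂ) * (1 - (ρ : ℂ) * ρ))).re := by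
        rw [main_complex ε φ hε_meas hφ_meas h_indep νε hε_law ρ hρ νφ hφ_law ι hι f hf g]
    _ = ‖g‖^2 * (M:ℝ) * (ι^2*(M:ℝ) + 1 - ι^2)
        * ((1-ρ^2)*(N:ℝ) + ρ^2*‖∑ n, f n‖^2) := by
        rw [Complex.mul_conj, Complex.mul_conj, Complex.normSq_eq_norm_sq, Complex.normSq_eq_norm_sq]
        rw [show ((‖g‖ ^ 2 : ℝ) : ℂ)
            * ((M : ℂ) * (M : ℂ) * ((ι : ℂ) * ι) + (M : ℂ) * (1 - (ι : ℂ) * ι))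
            * ((ρ : ℂ) * ρ * ((‖∑ n, f n‖ ^ 2 : ℝ) : ℂ) + (N : ℂ) * (1 - (ρ : ℂ) * ρ))
            = ((‖g‖^2 * (M:ℝ) * (ι^2*(M:ℝ) + 1 - ι^2)
              * ((1-ρ^2)*(N:ℝ) + ρ^2*‖∑ n, f n‖^2) : ℝ) : ℂ) from by
          push_cast
          ring]
        exact Complex.ofReal_re _
end
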